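/- arXiv:2105.00462 — 4 statements merged into one kernel-verified Lean document; each statement's English description precedes it below -/
import Mathlib

section
/- (Quantum Schwartz–Zippel lemma) Let n ≥ 1, let 0 < r₁ ≤ 1/2, and let X be a nonzero 2^n × 2^n complex matrix whose rank is at most e^{n·h(r₁)}. Then deg(X)/n ≥ 1/2 − √(r₁(1−r₁)). -/
noncomputable section

open scoped Matrix ComplexOrder

/-- The algebra of operators on `(ℂ²)^{⊗ n}`, as `2^n × 2^n` matrices indexed by `Fin n → Fin 2`. -/
abbrev Mq (n : ℕ) := Matrix (Fin n → Fin 2) (Fin n → Fin 2) ℂ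

/-- Normalized trace `τ(X) = 2^{-n} tr X`. -/
def qTau {n : ℕ} (X : Mq n) : ℂ := ((2 : ℂ) ^ n)⁻¹ * X.trace

/-- Real part of the normalized trace. -/
def qTauR {n : ℕ} (X : Mq n) : ℝ := (qTau X).re

/-- Normalized Hilbert–Schmidt inner product `⟨X, Y⟩ = τ(X† Y)`. -/
def qInner {n : ℕ} (X Y : Mq n) : ℂ := qTau (Xᴴ * Y)

/-- `|X| = √(X† X)`. -/
def mAbs {n : ℕ} (X : Mq n) : Mq n :=
  (Matrix.posSemidef_conjTranspose_mul_self X).1.eigenvectorUnitary.1 *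
    Matrix.diagonal ((↑) ∘ (√·) ∘ (Matrix.posSemidef_conjTranspose_mul_self X).1.eigenvalues) *
    (star (Matrix.posSemidef_conjTranspose_mul_self X).1.eigenvectorUnitary : Mq n)

/-- The entropy `Ent(X) = τ(X ln X) − τ(X) ln τ(X)` (with the convention `0 ln 0 = 0`),
for positive semidefinite `X`, via the continuous functional calculus. -/
def mEnt {n : ℕ} (X : Mq n) : ℝ :=
  qTauR (cfc (fun x : ℝ => x * Real.log x) X) - qTauR X * Real.log (qTauR X)

/-- Real powers `X^p` of a positive semidefinite matrix, by functional calculus on the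
support (`0 ^ p = 0` for `p ≠ 0`). -/
def mPow {n : ℕ} (X : Mq n) (p : ℝ) : Mq n := cfc (fun x : ℝ => x ^ p) X

/-- Normalized Schatten `p`-norm `‖X‖_p = (τ(|X|^p))^{1/p}`. -/
def schatten {n : ℕ} (p : ℝ) (X : Mq n) : ℝ := qTauR (mPow (mAbs X) p) ^ (1 / p)

/-- Conditional expectation onto the `i`-th qubit being maximally mixed:
`E_i = I^{⊗(i-1)} ⊗ (τ(·) I) ⊗ I^{⊗(n-i)}`. -/
def condExpQ {n : ℕ} (i : Fin n) (X : Mq n) : Mq n :=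
  Matrix.of fun a b =>
    if a i = b i then
      (2 : ℂ)⁻¹ * ∑ c : Fin 2, X (Function.update a i c) (Function.update b i c)
    else 0

/-- The Lindblad generator `K_n = Σ_i L̂_i`, where `L̂_i` acts as `L(X) = X − τ(X) I`
on the `i`-th tensor factor. -/
def Kq (n : ℕ) (X : Mq n) : Mq n := ∑ i : Fin n, (X - condExpQ i X)

/-- The depolarizing channel on the `i`-th qubit:
`e^{-t} X + (1 - e^{-t}) τ_i(X) ⊗ I_i`. -/
def depolStep {n : ℕ} (t : ℝ) (i : Fin n) (X : Mq n) : Mq n :=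
  (Real.exp (-t) : ℂ) • X + ((1 : ℂ) - (Real.exp (-t) : ℂ)) • condExpQ i X

/-- `Ψ_t^{⊗ n}`: the `n`-fold tensor power of the qubit depolarizing channel, i.e. the
composition over all qubits `i` of the depolarizing channel acting on the `i`-th factor. -/
def psiDep {n : ℕ} (t : ℝ) (X : Mq n) : Mq n :=
  (List.finRange n).foldr (fun i Y => depolStep t i Y) X

/-- The binary entropy function `h(s) = −s ln s − (1−s) ln(1−s)`. -/
def binEnt (s : ℝ) : ℝ := -(s * Real.log s) - (1 - s) * Real.log (1 - s)

/-- `h⁻¹ : [0, ln 2] → [0, 1/2]`, the inverse of the restriction of the binary entropy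
function to `[0, 1/2]`. -/
def binEntInv (y : ℝ) : ℝ := Function.invFunOn binEnt (Set.Icc 0 (1 / 2)) y

/-- `φ(ξ) = 1/2 − √(h⁻¹(ln 2 − ξ)(1 − h⁻¹(ln 2 − ξ)))`. -/
def phiF (ξ : ℝ) : ℝ :=
  1 / 2 - Real.sqrt (binEntInv (Real.log 2 - ξ) * (1 - binEntInv (Real.log 2 - ξ)))

/-- `α(ξ) = φ(ξ)/ξ` for `ξ ∈ (0, ln 2]`, with `α(0) = 1/2` by continuous extension. -/
def alphaF (ξ : ℝ) : ℝ := if ξ = 0 then 1 / 2 else ξ⁻¹ * phiF ξ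

/-- The Pauli matrices `σ₀ = I, σ₁, σ₂, σ₃`. -/
def pauli : Fin 4 → Matrix (Fin 2) (Fin 2) ℂ :=
  ![1, !![0, 1; 1, 0], !![0, -Complex.I; Complex.I, 0], !![1, 0; 0, -1]]

/-- The tensor product `σ_s = σ_{s₁} ⊗ ⋯ ⊗ σ_{sₙ}` of Pauli matrices. -/
def pauliT {n : ℕ} (s : Fin n → Fin 4) : Mq n :=
  Matrix.of fun a b => ∏ i, pauli (s i) (a i) (b i)

/-- The weight `|s|`: the number of nonzero coordinates of `s`. -/
def wt {n : ℕ} (s : Fin n → Fin 4) : ℕ := (Finset.univ.filter fun i => s i ≠ 0).card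

open Classical in
/-- The degree of `X`: the maximal weight `|s|` over `s` with nonzero Fourier
coefficient `x̂_s = ⟨σ_s, X⟩`. -/
noncomputable def qDeg {n : ℕ} (X : Mq n) : ℕ :=
  (Finset.univ.filter fun s : Fin n → Fin 4 => qInner (pauliT s) X ≠ 0).sup wt

namespace QSZhelp
open Matrix Finset Module
open Matrix Finset

lemma pauliI2 (c c' e e' : Fin 2) :
    ∑ j : Fin 4, pauli j c c' * (starRingEnd ℂ) (pauli j e e') =
      if c = e ∧ c' = e' then 2 else 0 := by
  fin_cases c <;> fin_cases c' <;> fin_cases e <;> fin_cases e' <;>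
    simp [pauli, Fin.sum_univ_four, Matrix.one_apply, Complex.ext_iff] <;> norm_num

variable {n : ℕ}

/-- entry-sum pairing -/
def ES {n : ℕ} (s : Fin n → Fin 4) (X : Mq n) : ℂ :=
  ∑ b : Fin n → Fin 2, ∑ a : Fin n → Fin 2, (starRingEnd ℂ) (pauliT s b a) * X b a

lemma qInner_pauliT (s : Fin n → Fin 4) (X : Mq n) :
    qInner (pauliT s) X = ((2:ℂ)^n)⁻¹ * ES s X := by
  unfold qInner qTau ES
  congr 1
  rw [Matrix.trace]
  simp only [Matrix.diag, Matrix.mul_apply, Matrix.conjTranspose_apply]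
  rw [Finset.sum_comm]
  rfl

lemma sum_pi_succ {M : Type*} [AddCommMonoid M] (f : (Fin (n+1) → Fin 2) → M) :
    ∑ a, f a = ∑ c : Fin 2, ∑ a' : Fin n → Fin 2, f (Fin.cons c a') := by
  rw [← (Fin.consEquiv (fun _ : Fin (n+1) => Fin 2)).sum_comp f, Fintype.sum_prod_type]
  rfl

lemma pauliT_cons (j : Fin 4) (s : Fin n → Fin 4) (c c' : Fin 2)
    (b a : Fin n → Fin 2) :
    pauliT (Fin.cons j s) (Fin.cons c b) (Fin.cons c' a) =
      pauli j c c' * pauliT s b a := by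
  unfold pauliT
  simp [Fin.prod_univ_succ]

/-- the `(c,c')` block of `X` w.r.t. the first qubit -/
def blk {n : ℕ} (c c' : Fin 2) (X : Mq (n+1)) : Mq n :=
  Matrix.of fun a b => X (Fin.cons c a) (Fin.cons c' b)

lemma ES_cons (j : Fin 4) (s : Fin n → Fin 4) (X : Mq (n+1)) :
    ES (Fin.cons j s) X =
      ∑ e : Fin 2, ∑ e' : Fin 2, (starRingEnd ℂ) (pauli j e e') * ES s (blk e e' X) := by
  unfold ES
  rw [sum_pi_succ (f := fun b => ∑ a, (starRingEnd ℂ) (pauliT (Fin.cons j s) b a) * X b a)]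
  refine Finset.sum_congr rfl fun e _ => ?_
  have h1 : ∀ b' : Fin n → Fin 2,
      ∑ a, (starRingEnd ℂ) (pauliT (Fin.cons j s) (Fin.cons e b') a) * X (Fin.cons e b') a
        = ∑ e' : Fin 2, ∑ a' : Fin n → Fin 2,
            (starRingEnd ℂ) (pauli j e e') *
              ((starRingEnd ℂ) (pauliT s b' a') * blk e e' X b' a') := by
    intro b'
    rw [sum_pi_succ]
    refine Finset.sum_congr rfl fun e' _ => Finset.sum_congr rfl fun a' _ => ?_
    rw [pauliT_cons, _root_.map_mul]
    simp only [blk, Matrix.of_apply]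
    ring
  simp_rw [h1]
  rw [Finset.sum_comm]
  simp [Finset.mul_sum]

lemma coeff_blk (c c' : Fin 2) (s : Fin n → Fin 4) (X : Mq (n+1)) :
    qInner (pauliT s) (blk c c' X) =
      ∑ j : Fin 4, pauli j c c' * qInner (pauliT (Fin.cons j s)) X := by
  have key : ∀ j, qInner (pauliT (Fin.cons j s)) X =
      ((2:ℂ)^(n+1))⁻¹ * ∑ e : Fin 2, ∑ e' : Fin 2,
        (starRingEnd ℂ) (pauli j e e') * ES s (blk e e' X) := fun j => by
    rw [qInner_pauliT, ES_cons]
  rw [qInner_pauliT]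
  simp_rw [key, Fin.sum_univ_four, Fin.sum_univ_two]
  fin_cases c <;> fin_cases c' <;>
    (simp [pauli, Matrix.one_apply, pow_succ, Complex.conj_I]; ring_nf; try (simp only [Complex.I_sq]; ring))

open Matrix Finset Module

variable {n : ℕ}

lemma entry_eq_blk (X : Mq (n+1)) (a b : Fin (n+1) → Fin 2) :
    X a b = blk (a 0) (b 0) X (Fin.tail a) (Fin.tail b) := by
  simp [blk, Fin.cons_self_tail]

lemma qInner_zero_right (Y : Mq n) : qInner Y (0 : Mq n) = 0 := by
  simp [qInner, qTau]

lemma eq_zero_of_coeff_zero : ∀ {n : ℕ} (X : Mq n),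
    (∀ s, qInner (pauliT s) X = 0) → X = 0 := by
  intro n
  induction n with
  | zero =>
    intro X h
    have key : ∀ u v : Fin 0 → Fin 2, X u v = 0 := by
      intro u v
      rw [show v = u from funext fun i => i.elim0]
      have h0 := h (fun i => i.elim0)
      rw [qInner_pauliT] at h0
      simp only [ES] at h0
      rw [show (Finset.univ : Finset (Fin 0 → Fin 2)) = {u} from
        Finset.eq_singleton_iff_unique_mem.mpr
          ⟨Finset.mem_univ u, fun x _ => funext fun i => i.elim0⟩,
        Finset.sum_singleton, Finset.sum_singleton] at h0
      simpa [pauliT] using h0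
    ext a b
    exact (key a b).trans rfl
  | succ n IH =>
    intro X h
    have hb : ∀ c c', blk c c' X = 0 := by
      intro c c'
      refine IH _ fun s => ?_
      rw [coeff_blk]
      simp [h]
    ext a b
    rw [entry_eq_blk X a b, hb]
    simp

lemma coeff_blk00 (s : Fin n → Fin 4) (X : Mq (n+1)) :
    qInner (pauliT s) (blk 0 0 X) =
      qInner (pauliT (Fin.cons 0 s)) X + qInner (pauliT (Fin.cons 3 s)) X := by
  rw [coeff_blk, Fin.sum_univ_four]
  simp [pauli, Matrix.one_apply]

lemma coeff_blk11 (s : Fin n → Fin 4) (X : Mq (n+1)) :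
    qInner (pauliT s) (blk 1 1 X) =
      qInner (pauliT (Fin.cons 0 s)) X - qInner (pauliT (Fin.cons 3 s)) X := by
  rw [coeff_blk, Fin.sum_univ_four]
  simp [pauli, Matrix.one_apply]
  ring

lemma coeff_blk01 (s : Fin n → Fin 4) (X : Mq (n+1)) :
    qInner (pauliT s) (blk 0 1 X) =
      qInner (pauliT (Fin.cons 1 s)) X - Complex.I * qInner (pauliT (Fin.cons 2 s)) X := by
  rw [coeff_blk, Fin.sum_univ_four]
  simp [pauli, Matrix.one_apply]
  ring

lemma coeff_blk10 (s : Fin n → Fin 4) (X : Mq (n+1)) :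
    qInner (pauliT s) (blk 1 0 X) =
      qInner (pauliT (Fin.cons 1 s)) X + Complex.I * qInner (pauliT (Fin.cons 2 s)) X := by
  rw [coeff_blk, Fin.sum_univ_four]
  simp [pauli, Matrix.one_apply]

lemma wt_cons (j : Fin 4) (s : Fin n → Fin 4) :
    wt (Fin.cons j s) = (if j = 0 then 0 else 1) + wt s := by
  unfold wt
  classical
  rw [Finset.card_filter, Finset.card_filter, Fin.sum_univ_succ]
  simp [Fin.cons_zero, Fin.cons_succ, ite_not]

open Matrix Finset Module

variable {n : ℕ}

lemma rank_pos_of_ne_zero {m : Type*} [Fintype m] [DecidableEq m]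
    (X : Matrix m m ℂ) (h : X ≠ 0) : 0 < X.rank := by
  rw [pos_iff_ne_zero]
  intro h0
  apply h
  have hr : LinearMap.range X.mulVecLin = ⊥ := by
    rw [Matrix.rank] at h0
    exact Submodule.finrank_eq_zero.mp h0
  have h2 : X.mulVecLin = 0 := LinearMap.range_eq_bot.mp hr
  ext a b
  have h3 : X.mulVecLin (Pi.single b 1) = 0 := by rw [h2]; rfl
  have h4 := congrFun h3 a
  rw [Matrix.mulVecLin_apply, Matrix.mulVec_single] at h4
  simpa using h4

def selL (c : Fin 2) : Matrix (Fin n → Fin 2) (Fin (n+1) → Fin 2) ℂ :=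
  Matrix.of fun a b => if b = Fin.cons c a then 1 else 0

def selR (c : Fin 2) : Matrix (Fin (n+1) → Fin 2) (Fin n → Fin 2) ℂ :=
  Matrix.of fun a b => if a = Fin.cons c b then 1 else 0

lemma blk_eq_mul (c c' : Fin 2) (X : Mq (n+1)) :
    blk c c' X = selL (n := n) c * X * selR (n := n) c' := by
  ext a b
  rw [Matrix.mul_assoc, Matrix.mul_apply]
  simp only [selL, Matrix.of_apply, ite_mul, one_mul, zero_mul]
  simp only [Finset.sum_ite_eq', Finset.mem_univ, if_true]
  simp only [Matrix.mul_apply, selR, Matrix.of_apply, mul_ite, mul_one, mul_zero]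
  simp only [Finset.sum_ite_eq', Finset.mem_univ, if_true]
  simp [blk]

lemma rank_blk_le (c c' : Fin 2) (X : Mq (n+1)) :
    (blk c c' X).rank ≤ X.rank := by
  rw [blk_eq_mul]
  exact (Matrix.rank_mul_le_left _ _).trans (Matrix.rank_mul_le_right _ _)

def embV (c : Fin 2) : ((Fin n → Fin 2) → ℂ) →ₗ[ℂ] ((Fin (n+1) → Fin 2) → ℂ) where
  toFun v := fun b => if b 0 = c then v (Fin.tail b) else 0
  map_add' := by intro u v; funext b; by_cases h : b 0 = c <;> simp [h]
  map_smul' := by intro t v; funext b; by_cases h : b 0 = c <;> simp [h]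

lemma embV_inj (c : Fin 2) : Function.Injective (embV (n := n) c) := by
  intro u v h
  funext a
  have h2 := congrFun h (Fin.cons c a)
  simpa [embV, Fin.cons_zero, Fin.tail_cons] using h2

lemma X_mulVec_embV (X : Mq (n+1)) (c : Fin 2)
    (hz : ∀ (b : Fin (n+1) → Fin 2) (u' : Fin n → Fin 2), b 0 ≠ c → X b (Fin.cons c u') = 0)
    (v : (Fin n → Fin 2) → ℂ) :
    X.mulVec (embV c v) = embV c ((blk c c X).mulVec v) := by
  funext b
  simp only [Matrix.mulVec, dotProduct, embV, LinearMap.coe_mk, AddHom.coe_mk]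
  rw [sum_pi_succ (f := fun u => X b u * if u 0 = c then v (Fin.tail u) else 0)]
  simp only [Fin.cons_zero, Fin.tail_cons]
  have step : ∀ e : Fin 2,
      (∑ a' : Fin n → Fin 2, X b (Fin.cons e a') * if e = c then v a' else 0)
        = if e = c then ∑ a' : Fin n → Fin 2, X b (Fin.cons e a') * v a' else 0 := by
    intro e; by_cases h : e = c <;> simp [h]
  simp only [step]
  simp only [Finset.sum_ite_eq', Finset.mem_univ, if_true]
  · by_cases h : b 0 = c
    · rw [if_pos h]
      have hb : b = Fin.cons c (Fin.tail b) := by rw [← h, Fin.cons_self_tail]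
      rw [hb]
      simp [blk, Matrix.mulVec, dotProduct]
    · rw [if_neg h]
      refine Finset.sum_eq_zero fun a' _ => ?_
      rw [hz b a' h, zero_mul]
open Matrix Finset Module

variable {n : ℕ}

lemma rank_blockdiag_ge (X : Mq (n+1)) (hB : blk 0 1 X = 0) (hC : blk 1 0 X = 0) :
    (blk 0 0 X).rank + (blk 1 1 X).rank ≤ X.rank := by
  classical
  have hz0 : ∀ (b : Fin (n+1) → Fin 2) (u' : Fin n → Fin 2), b 0 ≠ 0 →
      X b (Fin.cons 0 u') = 0 := by
    intro b u' h
    have hb1 : b 0 = 1 := by omega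
    have hb : b = Fin.cons 1 (Fin.tail b) := by rw [← hb1, Fin.cons_self_tail]
    rw [hb]
    have := congrFun (congrFun hC (Fin.tail b)) u'
    simpa [blk] using this
  have hz1 : ∀ (b : Fin (n+1) → Fin 2) (u' : Fin n → Fin 2), b 0 ≠ 1 →
      X b (Fin.cons 1 u') = 0 := by
    intro b u' h
    have hb1 : b 0 = 0 := by omega
    have hb : b = Fin.cons 0 (Fin.tail b) := by rw [← hb1, Fin.cons_self_tail]
    rw [hb]
    have := congrFun (congrFun hB (Fin.tail b)) u'
    simpa [blk] using this
  set A := blk 0 0 X with hA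
  set D := blk 1 1 X with hD
  set U : Submodule ℂ ((Fin (n+1) → Fin 2) → ℂ) :=
    (LinearMap.range A.mulVecLin).map (embV 0) with hU
  set V : Submodule ℂ ((Fin (n+1) → Fin 2) → ℂ) :=
    (LinearMap.range D.mulVecLin).map (embV 1) with hV
  have hUle : U ≤ LinearMap.range X.mulVecLin := by
    rintro x hx
    rw [hU] at hx
    obtain ⟨y, ⟨v, rfl⟩, rfl⟩ := hx
    refine ⟨embV 0 v, ?_⟩
    rw [Matrix.mulVecLin_apply, Matrix.mulVecLin_apply, X_mulVec_embV X 0 hz0 v]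
  have hVle : V ≤ LinearMap.range X.mulVecLin := by
    rintro x hx
    rw [hV] at hx
    obtain ⟨y, ⟨v, rfl⟩, rfl⟩ := hx
    refine ⟨embV 1 v, ?_⟩
    rw [Matrix.mulVecLin_apply, Matrix.mulVecLin_apply, X_mulVec_embV X 1 hz1 v]
  have hdisj : Disjoint U V := by
    rw [Submodule.disjoint_def]
    intro x hxU hxV
    rw [hU] at hxU
    rw [hV] at hxV
    obtain ⟨y, -, rfl⟩ := hxU
    obtain ⟨z, -, hz⟩ := hxV
    funext b
    by_cases h : b 0 = 0
    · have := congrFun hz b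
      simp only [embV, LinearMap.coe_mk, AddHom.coe_mk] at this ⊢
      rw [← this]
      rw [if_neg (by omega : ¬ b 0 = 1)]
      rfl
    · simp only [embV, LinearMap.coe_mk, AddHom.coe_mk]
      rw [if_neg h]
      rfl
  have hfinU : finrank ℂ U = A.rank := by
    rw [hU, Matrix.rank]
    exact (LinearEquiv.finrank_eq
      (Submodule.equivMapOfInjective _ (embV_inj 0) _)).symm
  have hfinV : finrank ℂ V = D.rank := by
    rw [hV, Matrix.rank]
    exact (LinearEquiv.finrank_eq
      (Submodule.equivMapOfInjective _ (embV_inj 1) _)).symm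
  have hsum : finrank ℂ U + finrank ℂ V = finrank ℂ ↥(U ⊔ V) := by
    rw [← Submodule.finrank_sup_add_finrank_inf_eq, hdisj.eq_bot, finrank_bot, add_zero]
  rw [← hfinU, ← hfinV, Matrix.rank, hsum]
  exact Submodule.finrank_mono (sup_le hUle hVle)
open Matrix Finset Module

lemma qInner_sub {n : ℕ} (Y X Z : Mq n) :
    qInner Y (X - Z) = qInner Y X - qInner Y Z := by
  simp [qInner, qTau, Matrix.mul_sub, Matrix.trace_sub, mul_sub]

theorem rank_bound : ∀ (n d : ℕ) (X : Mq n), X ≠ 0 →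
    (∀ s, d < wt s → qInner (pauliT s) X = 0) → 2^n ≤ 4^d * X.rank := by
  intro n
  induction n with
  | zero =>
    intro d X hX _
    have h1 : 0 < X.rank := rank_pos_of_ne_zero X hX
    have h2 : 0 < 4^d := Nat.pow_pos (by norm_num)
    calc 2^0 = 1 := by norm_num
      _ ≤ 4^d * X.rank := Nat.one_le_iff_ne_zero.mpr (Nat.mul_ne_zero h2.ne' h1.ne')
  | succ n IH =>
    intro d X hX hdeg
    have hvan : ∀ (j : Fin 4) (s' : Fin n → Fin 4), j ≠ 0 → d < wt s' + 1 →
        qInner (pauliT (Fin.cons j s')) X = 0 := by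
      intro j s' hj h
      refine hdeg _ ?_
      rw [wt_cons, if_neg hj]
      omega
    have hvan0 : ∀ (s' : Fin n → Fin 4), d < wt s' →
        qInner (pauliT (Fin.cons 0 s')) X = 0 := by
      intro s' h
      refine hdeg _ ?_
      rw [wt_cons, if_pos rfl]
      omega
    by_cases hB : blk 0 1 X = 0
    · by_cases hC : blk 1 0 X = 0
      · by_cases hD : blk 1 1 X = 0
        · -- D = 0, A carries everything, degree ≤ d - 1
          have hq : ∀ s', qInner (pauliT (Fin.cons 0 s')) X
              = qInner (pauliT (Fin.cons 3 s')) X := by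
            intro s'
            have h0 := coeff_blk11 s' X
            rw [hD, qInner_zero_right] at h0
            linear_combination -h0
          have hcA : ∀ s', qInner (pauliT s') (blk 0 0 X)
              = 2 * qInner (pauliT (Fin.cons 3 s')) X := by
            intro s'
            rw [coeff_blk00, hq s']
            ring
          have hA : blk 0 0 X ≠ 0 := by
            intro h0
            apply hX
            have hall : ∀ c c', blk c c' X = 0 := by
              intro c c'
              fin_cases c <;> fin_cases c' <;> assumption
            ext a b
            rw [entry_eq_blk X a b, hall]
            simp
          have hd1 : 1 ≤ d := by
            by_contra hd0
            have hd0' : d = 0 := by omega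
            apply hA
            refine eq_zero_of_coeff_zero _ fun s' => ?_
            rw [hcA s', hvan 3 s' (by decide) (by omega)]
            ring
          obtain ⟨k, rfl⟩ : ∃ k, d = k + 1 := ⟨d - 1, by omega⟩
          have h1 := IH k (blk 0 0 X) hA (fun s' hs' => by
            rw [hcA s', hvan 3 s' (by decide) (by omega)]; ring)
          calc 2^(n+1) = 2 * 2^n := by ring
            _ ≤ 2 * (4^k * (blk 0 0 X).rank) := Nat.mul_le_mul_left _ h1
            _ ≤ 4 * (4^k * X.rank) :=
                Nat.mul_le_mul (by norm_num)
                  (Nat.mul_le_mul_left _ (rank_blk_le 0 0 X))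
            _ = 4^(k+1) * X.rank := by ring
        · by_cases hA : blk 0 0 X = 0
          · -- A = 0, D carries everything, degree ≤ d - 1
            have hq : ∀ s', qInner (pauliT (Fin.cons 0 s')) X
                = -qInner (pauliT (Fin.cons 3 s')) X := by
              intro s'
              have h0 := coeff_blk00 s' X
              rw [hA, qInner_zero_right] at h0
              linear_combination -h0
            have hcD : ∀ s', qInner (pauliT s') (blk 1 1 X)
                = -2 * qInner (pauliT (Fin.cons 3 s')) X := by
              intro s'
              rw [coeff_blk11, hq s']
              ring
            have hd1 : 1 ≤ d := by
              by_contra hd0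
              have hd0' : d = 0 := by omega
              apply hD
              refine eq_zero_of_coeff_zero _ fun s' => ?_
              rw [hcD s', hvan 3 s' (by decide) (by omega)]
              ring
            obtain ⟨k, rfl⟩ : ∃ k, d = k + 1 := ⟨d - 1, by omega⟩
            have h1 := IH k (blk 1 1 X) hD (fun s' hs' => by
              rw [hcD s', hvan 3 s' (by decide) (by omega)]; ring)
            calc 2^(n+1) = 2 * 2^n := by ring
              _ ≤ 2 * (4^k * (blk 1 1 X).rank) := Nat.mul_le_mul_left _ h1
              _ ≤ 4 * (4^k * X.rank) :=
                  Nat.mul_le_mul (by norm_num)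
                    (Nat.mul_le_mul_left _ (rank_blk_le 1 1 X))
              _ = 4^(k+1) * X.rank := by ring
          · -- generic: A ≠ 0 and D ≠ 0, both of degree ≤ d
            have h1 := IH d (blk 0 0 X) hA (fun s' hs' => by
              rw [coeff_blk00, hvan0 s' hs', hvan 3 s' (by decide) (by omega)]; ring)
            have h2 := IH d (blk 1 1 X) hD (fun s' hs' => by
              rw [coeff_blk11, hvan0 s' hs', hvan 3 s' (by decide) (by omega)]; ring)
            have h3 := rank_blockdiag_ge X hB hC
            calc 2^(n+1) = 2^n + 2^n := by ring
              _ ≤ 4^d * (blk 0 0 X).rank + 4^d * (blk 1 1 X).rank := Nat.add_le_add h1 h2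
              _ = 4^d * ((blk 0 0 X).rank + (blk 1 1 X).rank) := by ring
              _ ≤ 4^d * X.rank := Nat.mul_le_mul_left _ h3
      · -- C ≠ 0, degree ≤ d - 1
        have hcC : ∀ s', qInner (pauliT s') (blk 1 0 X)
            = qInner (pauliT (Fin.cons 1 s')) X
              + Complex.I * qInner (pauliT (Fin.cons 2 s')) X := coeff_blk10 (X := X)
        have hd1 : 1 ≤ d := by
          by_contra hd0
          have hd0' : d = 0 := by omega
          apply hC
          refine eq_zero_of_coeff_zero _ fun s' => ?_
          rw [hcC s', hvan 1 s' (by decide) (by omega), hvan 2 s' (by decide) (by omega)]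
          ring
        obtain ⟨k, rfl⟩ : ∃ k, d = k + 1 := ⟨d - 1, by omega⟩
        have h1 := IH k (blk 1 0 X) hC (fun s' hs' => by
          rw [hcC s', hvan 1 s' (by decide) (by omega), hvan 2 s' (by decide) (by omega)]; ring)
        calc 2^(n+1) = 2 * 2^n := by ring
          _ ≤ 2 * (4^k * (blk 1 0 X).rank) := Nat.mul_le_mul_left _ h1
          _ ≤ 4 * (4^k * X.rank) :=
              Nat.mul_le_mul (by norm_num) (Nat.mul_le_mul_left _ (rank_blk_le 1 0 X))
          _ = 4^(k+1) * X.rank := by ring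
    · -- B ≠ 0, degree ≤ d - 1
      have hcB : ∀ s', qInner (pauliT s') (blk 0 1 X)
          = qInner (pauliT (Fin.cons 1 s')) X
            - Complex.I * qInner (pauliT (Fin.cons 2 s')) X := coeff_blk01 (X := X)
      have hd1 : 1 ≤ d := by
        by_contra hd0
        have hd0' : d = 0 := by omega
        apply hB
        refine eq_zero_of_coeff_zero _ fun s' => ?_
        rw [hcB s', hvan 1 s' (by decide) (by omega), hvan 2 s' (by decide) (by omega)]
        ring
      obtain ⟨k, rfl⟩ : ∃ k, d = k + 1 := ⟨d - 1, by omega⟩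
      have h1 := IH k (blk 0 1 X) hB (fun s' hs' => by
        rw [hcB s', hvan 1 s' (by decide) (by omega), hvan 2 s' (by decide) (by omega)]; ring)
      calc 2^(n+1) = 2 * 2^n := by ring
        _ ≤ 2 * (4^k * (blk 0 1 X).rank) := Nat.mul_le_mul_left _ h1
        _ ≤ 4 * (4^k * X.rank) :=
            Nat.mul_le_mul (by norm_num) (Nat.mul_le_mul_left _ (rank_blk_le 0 1 X))
        _ = 4^(k+1) * X.rank := by ring


lemma two_log_le (t : ℝ) (ht : 1 ≤ t) : 2 * Real.log t ≤ t - t⁻¹ := by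
  have key : MonotoneOn (fun t : ℝ => t - t⁻¹ - 2 * Real.log t) (Set.Ici 1) := by
    apply monotoneOn_of_deriv_nonneg (convex_Ici 1)
    · refine ContinuousOn.sub (continuousOn_id.sub (continuousOn_id.inv₀ fun x hx => ?_))
        (ContinuousOn.mul continuousOn_const (Real.continuousOn_log.mono fun x hx => ?_))
      · have : (1:ℝ) ≤ x := hx; positivity
      · have : (1:ℝ) ≤ x := hx
        simp only [Set.mem_compl_iff, Set.mem_singleton_iff]
        nlinarith
    · intro x hx
      rw [interior_Ici] at hx
      have hx1 : (1:ℝ) < x := hx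
      have hx0 : x ≠ 0 := by positivity
      have hd : HasDerivAt (fun t : ℝ => t - t⁻¹ - 2 * Real.log t)
          (1 - (-(x^2)⁻¹) - 2 * x⁻¹) x :=
        ((hasDerivAt_id x).sub (hasDerivAt_inv hx0)).sub
          ((Real.hasDerivAt_log hx0).const_mul 2)
      exact hd.differentiableAt.differentiableWithinAt
    · intro x hx
      rw [interior_Ici] at hx
      have hx1 : (1:ℝ) < x := hx
      have hx0 : x ≠ 0 := by positivity
      have hd : HasDerivAt (fun t : ℝ => t - t⁻¹ - 2 * Real.log t)
          (1 - (-(x^2)⁻¹) - 2 * x⁻¹) x :=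
        ((hasDerivAt_id x).sub (hasDerivAt_inv hx0)).sub
          ((Real.hasDerivAt_log hx0).const_mul 2)
      rw [hd.deriv]
      have hinv : (x⁻¹)^2 = (x^2)⁻¹ := inv_pow x 2
      nlinarith [sq_nonneg (1 - x⁻¹)]
  have h0 := key Set.self_mem_Ici (show t ∈ Set.Ici 1 from ht) ht
  simp only [Real.log_one, inv_one] at h0
  linarith
lemma neg_log_le (p : ℝ) (hp : 0 < p) (hp1 : p ≤ 1) :
    -Real.log p ≤ (1 - p) / Real.sqrt p := by
  have hs : 0 < Real.sqrt p := Real.sqrt_pos.mpr hp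
  have hsq : Real.sqrt p ^ 2 = p := Real.sq_sqrt hp.le
  have hs1 : Real.sqrt p ≤ 1 := by nlinarith
  have ht : 1 ≤ (Real.sqrt p)⁻¹ := (one_le_inv₀ hs).mpr hs1
  have h2 := two_log_le _ ht
  rw [Real.log_inv, Real.log_sqrt hp.le, inv_inv] at h2
  have heq : (Real.sqrt p)⁻¹ - Real.sqrt p = (1 - p) / Real.sqrt p := by
    rw [eq_div_iff hs.ne', sub_mul, inv_mul_cancel₀ hs.ne', Real.mul_self_sqrt hp.le]
  calc -Real.log p = 2 * (-(Real.log p / 2)) := by ring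
    _ ≤ (Real.sqrt p)⁻¹ - Real.sqrt p := h2
    _ = (1 - p) / Real.sqrt p := heq

lemma binEnt_le_small (p : ℝ) (hp : 0 < p) (hp2 : p ≤ 1/25) :
    binEnt p ≤ 2 * Real.log 2 * Real.sqrt (p * (1 - p)) := by
  have hq : 0 < 1 - p := by linarith
  have h1 : -Real.log p ≤ (1 - p) / Real.sqrt p := neg_log_le p hp (by linarith)
  have h2 : -Real.log (1 - p) ≤ (1 - (1 - p)) / Real.sqrt (1 - p) :=
    neg_log_le _ hq (by linarith)
  have hsp : Real.sqrt p ^ 2 = p := Real.sq_sqrt hp.le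
  have hsq : Real.sqrt (1-p) ^ 2 = 1 - p := Real.sq_sqrt hq.le
  have hsp0 : 0 < Real.sqrt p := Real.sqrt_pos.mpr hp
  have hsq0 : 0 < Real.sqrt (1-p) := Real.sqrt_pos.mpr hq
  have hsplit : Real.sqrt (p * (1-p)) = Real.sqrt p * Real.sqrt (1-p) :=
    Real.sqrt_mul hp.le _
  have hsp5 : Real.sqrt p ≤ 1/5 := by nlinarith
  have hsq1 : Real.sqrt (1-p) ≤ 1 := by nlinarith
  have hA : p * ((1 - p) / Real.sqrt p) = Real.sqrt p * (1 - p) := by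
    rw [show p * ((1 - p) / Real.sqrt p) = (1-p) * (p / Real.sqrt p) by ring,
      Real.div_sqrt]
    ring
  have hB : (1 - p) * ((1 - (1 - p)) / Real.sqrt (1-p)) = Real.sqrt (1-p) * p := by
    rw [show (1 - (1-p)) = p by ring,
      show (1-p) * (p / Real.sqrt (1-p)) = p * ((1-p) / Real.sqrt (1-p)) by ring,
      Real.div_sqrt]
    ring
  have hL : binEnt p ≤ Real.sqrt p * (1-p) + Real.sqrt (1-p) * p := by
    unfold binEnt
    have m1 := mul_le_mul_of_nonneg_left h1 hp.le
    have m2 := mul_le_mul_of_nonneg_left h2 hq.le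
    rw [hA] at m1
    rw [hB] at m2
    nlinarith
  have hlog : (0.6931471803 : ℝ) < Real.log 2 := Real.log_two_gt_d9
  calc binEnt p ≤ Real.sqrt p * (1-p) + Real.sqrt (1-p) * p := hL
    _ = Real.sqrt p * Real.sqrt (1-p) * (Real.sqrt (1-p) + Real.sqrt p) := by
        linear_combination (-Real.sqrt p) * hsq - Real.sqrt (1-p) * hsp
    _ ≤ Real.sqrt p * Real.sqrt (1-p) * (1 + 1/5) := by
        apply mul_le_mul_of_nonneg_left (by linarith) (by positivity)
    _ ≤ 2 * Real.log 2 * (Real.sqrt p * Real.sqrt (1-p)) := by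
        nlinarith [mul_pos hsp0 hsq0]
    _ = 2 * Real.log 2 * Real.sqrt (p * (1-p)) := by rw [hsplit]

lemma G_nonpos (p : ℝ) (h1 : 1/25 ≤ p) (h2 : p ≤ 1/2) :
    Real.log p - Real.log (1-p) + 2*(1-2*p) ≤ 0 := by
  have hder : ∀ x ∈ Set.Icc (1/25 : ℝ) (1/2), HasDerivAt
      (fun p : ℝ => Real.log p - Real.log (1-p) + 2*(1-2*p))
      (x⁻¹ - (-1)/(1-x) + 2*(-2)) x := by
    intro x hx
    obtain ⟨hx1, hx2⟩ := hx
    have hx0 : x ≠ 0 := by positivity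
    have hx1' : (1:ℝ) - x ≠ 0 := by norm_num; nlinarith
    have d1 : HasDerivAt Real.log x⁻¹ x := Real.hasDerivAt_log hx0
    have d2 : HasDerivAt (fun p : ℝ => 1 - p) (-1) x := by
      simpa using (hasDerivAt_id' x).const_sub (1:ℝ)
    have d3 : HasDerivAt (fun p : ℝ => Real.log (1 - p)) ((-1)/(1-x)) x := by
      have := d2.log hx1'
      simpa using this
    have d4 : HasDerivAt (fun p : ℝ => 2*(1-2*p)) (2*(-2)) x := by
      have : HasDerivAt (fun p : ℝ => 1 - 2*p) (-2) x := by
        simpa using ((hasDerivAt_id' x).const_mul (2:ℝ)).const_sub (1:ℝ)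
      simpa using this.const_mul 2
    exact (d1.sub d3).add d4
  have key : MonotoneOn (fun p : ℝ => Real.log p - Real.log (1-p) + 2*(1-2*p))
      (Set.Icc (1/25) (1/2)) := by
    apply monotoneOn_of_deriv_nonneg (convex_Icc _ _)
    · intro x hx
      exact (hder x hx).differentiableAt.continuousAt.continuousWithinAt
    · intro x hx
      rw [interior_Icc] at hx
      exact (hder x (Set.mem_Icc_of_Ioo hx)).differentiableAt.differentiableWithinAt
    · intro x hx
      rw [interior_Icc] at hx
      obtain ⟨hx1, hx2⟩ := hx
      rw [(hder x (Set.mem_Icc_of_Ioo ⟨hx1, hx2⟩)).deriv]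
      have hx0 : 0 < x := by linarith
      have hx3 : 0 < 1 - x := by linarith
      have e : x⁻¹ - (-1)/(1-x) + 2*(-2) = 1/x + 1/(1-x) - 4 := by ring
      rw [e]
      have h4 : x*(1-x) ≤ 1/4 := by nlinarith [sq_nonneg (1-2*x)]
      have e2 : 1/x + 1/(1-x) = 1/(x*(1-x)) := by
        field_simp
        ring
      have h5 : (4:ℝ) ≤ 1/(x*(1-x)) := by
        rw [le_div_iff₀ (by positivity)]
        linarith
      linarith [e2 ▸ h5]
  have hmem : p ∈ Set.Icc (1/25 : ℝ) (1/2) := ⟨h1, h2⟩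
  have hmem2 : (1/2 : ℝ) ∈ Set.Icc (1/25 : ℝ) (1/2) := by norm_num
  have h0 := key hmem hmem2 h2
  norm_num at h0
  linarith
lemma binEnt_le_quad (p : ℝ) (h1 : 1/25 ≤ p) (h2 : p ≤ 1/2) :
    binEnt p ≤ Real.log 2 - (1-2*p)^2/2 := by
  have hder : ∀ x ∈ Set.Icc (1/25 : ℝ) (1/2), HasDerivAt
      (fun p : ℝ => p * Real.log p + (1-p) * Real.log (1-p) + Real.log 2 - (1-2*p)^2/2)
      (Real.log x - Real.log (1-x) + 2*(1-2*x)) x := by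
    intro x hx
    obtain ⟨hx1, hx2⟩ := hx
    have hx0 : x ≠ 0 := by positivity
    have hx3 : (0:ℝ) < 1 - x := by linarith
    have d1 : HasDerivAt (fun p : ℝ => p * Real.log p) (Real.log x + 1) x := by
      have := (hasDerivAt_id' x).fun_mul (Real.hasDerivAt_log hx0)
      simpa [mul_inv_cancel₀ hx0, add_comm] using this
    have d2 : HasDerivAt (fun p : ℝ => 1 - p) (-1) x := by
      simpa using (hasDerivAt_id' x).const_sub (1:ℝ)
    have d3 : HasDerivAt (fun p : ℝ => (1-p) * Real.log (1-p))
        ((-1) * Real.log (1-x) + (1-x) * ((-1)/(1-x))) x := by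
      exact d2.mul (d2.log hx3.ne')
    have d4 : HasDerivAt (fun p : ℝ => (1-2*p)^2/2) ((2*(1-2*x)*(-2))/2) x := by
      have db : HasDerivAt (fun p : ℝ => 1 - 2*p) (-2) x := by
        simpa using ((hasDerivAt_id' x).const_mul (2:ℝ)).const_sub (1:ℝ)
      simpa [pow_one] using (db.pow 2).div_const 2
    have := ((d1.fun_add d3).add_const (Real.log 2)).fun_sub d4
    refine this.congr_deriv ?_
    rw [show (1-x) * ((-1)/(1-x)) = -1 by field_simp]
    ring
  have key : AntitoneOn
      (fun p : ℝ => p * Real.log p + (1-p) * Real.log (1-p) + Real.log 2 - (1-2*p)^2/2)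
      (Set.Icc (1/25) (1/2)) := by
    apply antitoneOn_of_deriv_nonpos (convex_Icc _ _)
    · intro x hx
      exact (hder x hx).differentiableAt.continuousAt.continuousWithinAt
    · intro x hx
      rw [interior_Icc] at hx
      exact (hder x (Set.mem_Icc_of_Ioo hx)).differentiableAt.differentiableWithinAt
    · intro x hx
      rw [interior_Icc] at hx
      obtain ⟨ha, hb⟩ := hx
      rw [(hder x (Set.mem_Icc_of_Ioo ⟨ha, hb⟩)).deriv]
      exact G_nonpos x ha.le hb.le
  have h0 := key ⟨h1, h2⟩ (by norm_num : (1/2:ℝ) ∈ Set.Icc (1/25:ℝ) (1/2)) h2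
  have hhalf : (1/2 : ℝ) * Real.log (1/2) + (1-(1/2)) * Real.log (1-(1/2))
      + Real.log 2 - (1-2*(1/2))^2/2 = 0 := by
    norm_num
    rw [show (1/2:ℝ) = 2⁻¹ by norm_num, Real.log_inv]
    ring
  simp only at h0
  rw [hhalf] at h0
  unfold binEnt
  linarith

lemma binEnt_le (p : ℝ) (hp : 0 < p) (h2 : p ≤ 1/2) :
    binEnt p ≤ 2 * Real.log 2 * Real.sqrt (p * (1 - p)) := by
  rcases le_or_gt p (1/25) with hsm | hlg
  · exact binEnt_le_small p hp hsm
  · have h1 : 1/25 ≤ p := hlg.le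
    have hq : 0 ≤ p * (1-p) := by nlinarith
    have hs2 : Real.sqrt (p*(1-p)) ^ 2 = p*(1-p) := Real.sq_sqrt hq
    have hs0 : 0 ≤ Real.sqrt (p*(1-p)) := Real.sqrt_nonneg _
    have hslb : (0.1959 : ℝ) ≤ Real.sqrt (p*(1-p)) := by
      rw [Real.le_sqrt (by norm_num) hq]
      nlinarith
    have hsub : Real.sqrt (p*(1-p)) ≤ 1/2 := by nlinarith
    have hA := binEnt_le_quad p h1 h2
    have hlog1 : (0.6931471803 : ℝ) < Real.log 2 := Real.log_two_gt_d9
    have hlog2 : Real.log 2 < 0.6931471808 := Real.log_two_lt_d9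
    have hfac : 0 ≤ (1/2 - Real.sqrt (p*(1-p)))
        * (Real.sqrt (p*(1-p)) - (2*Real.log 2 - 1)/2) := by
      apply mul_nonneg (by linarith)
      nlinarith
    nlinarith [hs2]

end QSZhelp

/-- **Quantum Schwartz–Zippel lemma** (Theorem 5 of the paper): a nonzero operator of
rank at most `e^{n h(r₁)}` has degree at least `n (1/2 − √(r₁(1−r₁)))`. -/
theorem quantum_schwartz_zippel (n : ℕ) (hn : 1 ≤ n) (r₁ : ℝ) (hr₁ : 0 < r₁)
    (hr₁' : r₁ ≤ 1 / 2) (X : Mq n) (hX0 : X ≠ 0)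
    (hrank : (X.rank : ℝ) ≤ Real.exp (n * binEnt r₁)) :
    1 / 2 - Real.sqrt (r₁ * (1 - r₁)) ≤ (qDeg X : ℝ) / n := by
  classical
  set d := qDeg X with hd
  have hcoeff : ∀ s, d < wt s → qInner (pauliT s) X = 0 := by
    intro s hs
    by_contra h
    have hmem : s ∈ Finset.univ.filter
        (fun s : Fin n → Fin 4 => qInner (pauliT s) X ≠ 0) :=
      Finset.mem_filter.mpr ⟨Finset.mem_univ _, h⟩
    have hle := Finset.le_sup (f := wt) hmem
    rw [hd] at hs
    rw [qDeg] at hs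
    omega
  have hA := QSZhelp.rank_bound n d X hX0 hcoeff
  have hAr : (2:ℝ)^n ≤ (4:ℝ)^d * (X.rank : ℝ) := by exact_mod_cast hA
  have h2 : (2:ℝ)^n ≤ (4:ℝ)^d * Real.exp (n * binEnt r₁) :=
    le_trans hAr (mul_le_mul_of_nonneg_left hrank (by positivity))
  have hlogle : Real.log ((2:ℝ)^n) ≤ Real.log ((4:ℝ)^d * Real.exp (n * binEnt r₁)) :=
    Real.log_le_log (by positivity) h2
  rw [Real.log_mul (by positivity) (Real.exp_ne_zero _), Real.log_exp,
    Real.log_pow, Real.log_pow] at hlogle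
  have hlog4 : Real.log 4 = 2 * Real.log 2 := by
    rw [show (4:ℝ) = 2^2 by norm_num, Real.log_pow]
    push_cast
    ring
  rw [hlog4] at hlogle
  -- hlogle : n * log 2 ≤ d * (2 * log 2) + n * binEnt r₁
  have hB := QSZhelp.binEnt_le r₁ hr₁ hr₁'
  have hn0 : (0:ℝ) < n := by exact_mod_cast hn
  have h5 : (n:ℝ) * binEnt r₁ ≤ (n:ℝ) * (2 * Real.log 2 * Real.sqrt (r₁ * (1 - r₁))) :=
    mul_le_mul_of_nonneg_left hB hn0.le
  rw [le_div_iff₀ hn0]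
  have hlog2 : 0 < Real.log 2 := Real.log_pos (by norm_num)
  apply le_of_mul_le_mul_right _ (by positivity : (0:ℝ) < 2 * Real.log 2)
  nlinarith [hlogle, h5]

end
end

section
/- Let n ≥ 1 and let C be any 2^n × 2^n complex matrix. Then Re⟨C, K_n C⟩ + Re⟨C†, K_n C†⟩ ≥ ⟨|C|, K_n |C|⟩ + ⟨|C†|, K_n |C†|⟩, where |C| = √(C†C) and |C†| = √(CC†). -/
noncomputable section

open scoped Matrix ComplexOrder

namespace Matrix.PosSemidef

open scoped MatrixOrder

variable {ι : Type*} [Fintype ι] [DecidableEq ι]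

/-- Square root of a positive semidefinite matrix (spectral form). -/
def sqrt {A : Matrix ι ι ℂ} (hA : A.PosSemidef) : Matrix ι ι ℂ :=
  hA.1.eigenvectorUnitary.1 *
    Matrix.diagonal ((↑) ∘ (√·) ∘ hA.1.eigenvalues) *
    (star hA.1.eigenvectorUnitary : Matrix ι ι ℂ)

lemma sqrt_eq_cfc {A : Matrix ι ι ℂ} (hA : A.PosSemidef) : hA.sqrt = CFC.sqrt A := by
  rw [CFC.sqrt_eq_cfc, cfc_nnreal_eq_real _ A (Matrix.nonneg_iff_posSemidef.mpr hA), hA.1.cfc_eq]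
  simp only [Matrix.IsHermitian.cfc, Unitary.conjStarAlgAut_apply, sqrt]
  congr 3
  funext j
  simp [Real.coe_sqrt, Real.coe_toNNReal', max_eq_left (hA.eigenvalues_nonneg j)]

lemma posSemidef_sqrt {A : Matrix ι ι ℂ} (hA : A.PosSemidef) : hA.sqrt.PosSemidef := by
  rw [sqrt_eq_cfc]
  exact Matrix.nonneg_iff_posSemidef.mp (CFC.sqrt_nonneg A)

lemma sqrt_mul_self {A : Matrix ι ι ℂ} (hA : A.PosSemidef) : hA.sqrt * hA.sqrt = A := by
  rw [sqrt_eq_cfc]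
  exact CFC.sqrt_mul_sqrt_self A (Matrix.nonneg_iff_posSemidef.mpr hA)

lemma eq_sqrt_of_sq_eq {A : Matrix ι ι ℂ} (hA : A.PosSemidef) (B : Matrix ι ι ℂ)
    {hB : B.PosSemidef} (h : A ^ 2 = B) : A = hB.sqrt := by
  rw [sqrt_eq_cfc]
  exact (CFC.sqrt_unique (by rw [← sq]; exact h) (Matrix.nonneg_iff_posSemidef.mpr hA)).symm

end Matrix.PosSemidef

namespace DirichletAux

open Matrix

variable {ι : Type*} [Fintype ι] [DecidableEq ι]

lemma trace_re_nonneg_of_posSemidef {P : Matrix ι ι ℂ} (hP : P.PosSemidef) :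
    0 ≤ P.trace.re := by
  rw [Matrix.trace, Complex.re_sum]
  refine Finset.sum_nonneg fun i _ => ?_
  have h := hP.re_dotProduct_nonneg (Pi.single i 1)
  have hd : dotProduct (star (Pi.single i 1)) (P *ᵥ (Pi.single i 1)) = P.diag i := by
    simp [dotProduct, Matrix.mulVec, Pi.single_apply, apply_ite, Finset.sum_ite_eq,
      Finset.mul_sum, mul_comm]
  rw [hd] at h
  exact h

lemma trace_mul_re_nonneg {P Q : Matrix ι ι ℂ} (hP : P.PosSemidef) (hQ : Q.PosSemidef) :
    0 ≤ (P * Q).trace.re := by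
  have hS := hP.posSemidef_sqrt
  have h2 : (P * Q).trace = (hP.sqrt * Q * hP.sqrt).trace := by
    rw [show P * Q = hP.sqrt * (hP.sqrt * Q) by
      rw [← Matrix.mul_assoc, hP.sqrt_mul_self]]
    rw [Matrix.trace_mul_comm]
  have h3 : (hP.sqrt * Q * hP.sqrt).PosSemidef := by
    have := hQ.conjTranspose_mul_mul_same hP.sqrt
    rwa [hS.1] at this
  rw [h2]
  exact trace_re_nonneg_of_posSemidef h3

omit [DecidableEq ι] in
lemma trace_fromBlocks {m : Type*} [Fintype m] (A : Matrix ι ι ℂ) (B : Matrix ι m ℂ)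
    (C : Matrix m ι ℂ) (D : Matrix m m ℂ) :
    (Matrix.fromBlocks A B C D).trace = A.trace + D.trace := by
  simp [Matrix.trace, Fintype.sum_sum_type, Matrix.fromBlocks, Matrix.diag]

section kraus

variable {κ : Type*} [Fintype κ] [DecidableEq κ]
variable (val : κ → Fin 2) (upd : κ → Fin 2 → κ)

/-- Generalized single-site conditional expectation. -/
def genE (M : Matrix κ κ ℂ) : Matrix κ κ ℂ :=
  Matrix.of fun p q =>
    if val p = val q then (2 : ℂ)⁻¹ * ∑ c : Fin 2, M (upd p c) (upd q c) else 0

/-- Kraus operators for `genE`. -/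
def krT (d c : Fin 2) : Matrix κ κ ℂ :=
  Matrix.of fun p q => if p = upd q d ∧ val q = c then (((Real.sqrt 2)⁻¹ : ℝ) : ℂ) else 0

variable (h1 : ∀ p c, val (upd p c) = c) (h2 : ∀ p c d, upd (upd p c) d = upd p d)
  (h3 : ∀ p, upd p (val p) = p)

include h1 h2 h3 in
lemma krT_mul (M : Matrix κ κ ℂ) (d c : Fin 2) (p q : κ) :
    (krT val upd d c * M) p q =
      if val p = d then (((Real.sqrt 2)⁻¹ : ℝ) : ℂ) * M (upd p c) q else 0 := by
  rw [Matrix.mul_apply]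
  by_cases hpd : val p = d
  · rw [if_pos hpd, Finset.sum_eq_single (upd p c)]
    · have hcond : p = upd (upd p c) d ∧ val (upd p c) = c := by
        refine ⟨?_, h1 p c⟩
        rw [h2, ← hpd, h3]
      rw [krT, Matrix.of_apply, if_pos hcond]
    · intro j _ hj
      rw [krT, Matrix.of_apply, if_neg, zero_mul]
      rintro ⟨hpj, hvj⟩
      apply hj
      rw [hpj, h2, ← hvj, h3]
    · intro hmem
      exact absurd (Finset.mem_univ _) hmem
  · rw [if_neg hpd]
    apply Finset.sum_eq_zero
    intro j _
    rw [krT, Matrix.of_apply, if_neg, zero_mul]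
    rintro ⟨hpj, -⟩
    exact hpd (by rw [hpj, h1])

include h1 h2 h3 in
lemma mul_krT (N : Matrix κ κ ℂ) (d c : Fin 2) (p q : κ) :
    (N * (krT val upd d c)ᴴ) p q =
      if val q = d then (((Real.sqrt 2)⁻¹ : ℝ) : ℂ) * N p (upd q c) else 0 := by
  rw [Matrix.mul_apply]
  have hent : ∀ j, (krT val upd d c)ᴴ j q =
      if q = upd j d ∧ val j = c then (((Real.sqrt 2)⁻¹ : ℝ) : ℂ) else 0 := by
    intro j
    rw [Matrix.conjTranspose_apply, krT, Matrix.of_apply]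
    split_ifs <;> simp
  by_cases hqd : val q = d
  · rw [if_pos hqd, Finset.sum_eq_single (upd q c)]
    · have hcond : q = upd (upd q c) d ∧ val (upd q c) = c := by
        refine ⟨?_, h1 q c⟩
        rw [h2, ← hqd, h3]
      rw [hent, if_pos hcond, mul_comm]
    · intro j _ hj
      rw [hent, if_neg, mul_zero]
      rintro ⟨hqj, hvj⟩
      apply hj
      rw [hqj, h2, ← hvj, h3]
    · intro hmem
      exact absurd (Finset.mem_univ _) hmem
  · rw [if_neg hqd]
    apply Finset.sum_eq_zero
    intro j _
    rw [hent, if_neg, mul_zero]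
    rintro ⟨hqj, -⟩
    exact hqd (by rw [hqj, h1])

include h1 h2 h3 in
lemma genE_eq_sum (M : Matrix κ κ ℂ) :
    genE val upd M = ∑ d : Fin 2, ∑ c : Fin 2, krT val upd d c * M * (krT val upd d c)ᴴ := by
  have hr : (((Real.sqrt 2)⁻¹ : ℝ) : ℂ) * (((Real.sqrt 2)⁻¹ : ℝ) : ℂ) = (2 : ℂ)⁻¹ := by
    rw [← Complex.ofReal_mul, ← mul_inv, Real.mul_self_sqrt (by norm_num)]
    norm_num
  ext p q
  have hterm : ∀ d c : Fin 2, (krT val upd d c * M * (krT val upd d c)ᴴ) p q =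
      if val p = d ∧ val q = d then (2 : ℂ)⁻¹ * M (upd p c) (upd q c) else 0 := by
    intro d c
    rw [mul_krT val upd h1 h2 h3, krT_mul val upd h1 h2 h3]
    by_cases hq : val q = d
    · rw [if_pos hq]
      by_cases hp : val p = d
      · rw [if_pos hp, if_pos ⟨hp, hq⟩, ← mul_assoc, hr]
      · rw [if_neg hp, if_neg (fun h => hp h.1), mul_zero]
    · rw [if_neg hq, if_neg (fun h => hq h.2)]
  simp only [Matrix.sum_apply]
  rw [Finset.sum_congr rfl fun d _ => Finset.sum_congr rfl fun c _ => hterm d c]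
  by_cases h : val p = val q
  · simp only [genE, Matrix.of_apply, if_pos h]
    rw [Finset.sum_comm, Finset.mul_sum]
    refine Finset.sum_congr rfl fun c _ => ?_
    have hcongr : ∀ d : Fin 2, (if val p = d ∧ val q = d then
        (2 : ℂ)⁻¹ * M (upd p c) (upd q c) else 0) =
        (if val p = d then (2 : ℂ)⁻¹ * M (upd p c) (upd q c) else 0) := by
      intro d
      by_cases hd : val p = d
      · rw [if_pos ⟨hd, h ▸ hd⟩, if_pos hd]
      · rw [if_neg (fun hc => hd hc.1), if_neg hd]
    rw [Finset.sum_congr rfl fun d _ => hcongr d, Finset.sum_ite_eq]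
    simp
  · simp only [genE, Matrix.of_apply, if_neg h]
    symm
    refine Finset.sum_eq_zero fun d _ => Finset.sum_eq_zero fun c _ => ?_
    rw [if_neg]
    rintro ⟨hp, hq⟩
    exact h (hp.trans hq.symm)

include h1 h2 h3 in
lemma genE_posSemidef {M : Matrix κ κ ℂ} (hM : M.PosSemidef) :
    (genE val upd M).PosSemidef := by
  rw [genE_eq_sum val upd h1 h2 h3]
  refine Finset.sum_induction _ _ (fun A B hA hB => hA.add hB) Matrix.PosSemidef.zero
    fun d _ => ?_
  refine Finset.sum_induction _ _ (fun A B hA hB => hA.add hB) Matrix.PosSemidef.zero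
    fun c _ => ?_
  exact hM.mul_mul_conjTranspose_same _

end kraus

section polar

/-- Polar decomposition facts for a square complex matrix. -/
lemma exists_polar (C : Matrix ι ι ℂ) :
    ∃ W : Matrix ι ι ℂ,
      W * (Matrix.posSemidef_conjTranspose_mul_self C).sqrt = C ∧
      W * (Matrix.posSemidef_conjTranspose_mul_self C).sqrt * Wᴴ =
        (Matrix.posSemidef_conjTranspose_mul_self Cᴴ).sqrt := by
  set S : Matrix ι ι ℂ := (Matrix.posSemidef_conjTranspose_mul_self C).sqrt with hSdef
  have hS : S.PosSemidef := Matrix.PosSemidef.posSemidef_sqrt _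
  have hH : S.IsHermitian := hS.1
  set U : Matrix ι ι ℂ := (hH.eigenvectorUnitary : Matrix ι ι ℂ) with hUdef
  set e : ι → ℝ := hH.eigenvalues with hedef
  have hU1 : star U * U = 1 := by
    have := hH.eigenvectorUnitary.2
    rw [Matrix.mem_unitaryGroup_iff'] at this
    exact this
  have hU2 : U * star U = 1 := by
    have := hH.eigenvectorUnitary.2
    rw [Matrix.mem_unitaryGroup_iff] at this
    exact this
  have dmul : ∀ a b : ι → ℝ,
      (U * Matrix.diagonal (RCLike.ofReal ∘ a) * star U) *
        (U * Matrix.diagonal (RCLike.ofReal ∘ b) * star U) =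
        U * Matrix.diagonal (RCLike.ofReal ∘ fun j => a j * b j) * star U := by
    intro a b
    calc (U * Matrix.diagonal (RCLike.ofReal ∘ a) * star U) *
          (U * Matrix.diagonal (RCLike.ofReal ∘ b) * star U)
        = U * (Matrix.diagonal (RCLike.ofReal ∘ a) * (star U * U) *
            Matrix.diagonal (RCLike.ofReal ∘ b)) * star U := by
          simp only [Matrix.mul_assoc]
      _ = U * (Matrix.diagonal (RCLike.ofReal ∘ a) * Matrix.diagonal (RCLike.ofReal ∘ b)) *
            star U := by rw [hU1, Matrix.mul_one]
      _ = U * Matrix.diagonal (RCLike.ofReal ∘ fun j => a j * b j) * star U := by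
          rw [Matrix.diagonal_mul_diagonal]
          have hfun : (fun i => (RCLike.ofReal ∘ a) i * (RCLike.ofReal ∘ b) i) =
              ((RCLike.ofReal ∘ fun j => a j * b j) : ι → ℂ) := by
            funext j
            simp [Function.comp]
          rw [hfun]
  have dherm : ∀ a : ι → ℝ,
      (U * Matrix.diagonal (RCLike.ofReal ∘ a) * star U)ᴴ =
        U * Matrix.diagonal (RCLike.ofReal ∘ a) * star U := by
    intro a
    rw [Matrix.conjTranspose_mul, Matrix.conjTranspose_mul, Matrix.diagonal_conjTranspose]
    have hu1 : (star U)ᴴ = U := by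
      rw [Matrix.star_eq_conjTranspose, Matrix.conjTranspose_conjTranspose]
    have hu2 : Uᴴ = star U := (Matrix.star_eq_conjTranspose U).symm
    have hd : star (RCLike.ofReal ∘ a) = ((RCLike.ofReal ∘ a) : ι → ℂ) := by
      funext j
      simp [Function.comp, RCLike.conj_ofReal]
    rw [hu1, hu2, hd, ← Matrix.mul_assoc]
  have dpsd : ∀ a : ι → ℝ, (∀ j, 0 ≤ a j) →
      (U * Matrix.diagonal (RCLike.ofReal ∘ a) * star U).PosSemidef := by
    intro a ha
    have hd : (Matrix.diagonal ((RCLike.ofReal ∘ a) : ι → ℂ)).PosSemidef := by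
      refine Matrix.posSemidef_diagonal_iff.mpr fun j => ?_
      rw [RCLike.nonneg_iff]
      constructor
      · simpa using ha j
      · simp
    have := hd.mul_mul_conjTranspose_same U
    rwa [← Matrix.star_eq_conjTranspose] at this
  have done1 : Matrix.diagonal (RCLike.ofReal ∘ fun _ : ι => (1:ℝ)) = (1 : Matrix ι ι ℂ) := by
    have : (RCLike.ofReal ∘ fun _ : ι => (1:ℝ)) = fun _ : ι => (1 : ℂ) := by
      funext j; simp [Function.comp]
    rw [this, Matrix.diagonal_one]
  have done0 : Matrix.diagonal (RCLike.ofReal ∘ fun _ : ι => (0:ℝ)) = (0 : Matrix ι ι ℂ) := by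
    have : (RCLike.ofReal ∘ fun _ : ι => (0:ℝ)) = fun _ : ι => (0 : ℂ) := by
      funext j; simp [Function.comp]
    rw [this, Matrix.diagonal_zero]
  have dcongr : ∀ a b : ι → ℝ, (∀ j, a j = b j) →
      Matrix.diagonal ((RCLike.ofReal ∘ a) : ι → ℂ) =
        Matrix.diagonal ((RCLike.ofReal ∘ b) : ι → ℂ) := by
    intro a b hab
    have : a = b := funext hab
    rw [this]
  have hSU : S = U * Matrix.diagonal (RCLike.ofReal ∘ e) * star U := hH.spectral_theorem
  have hCC : Cᴴ * C = U * Matrix.diagonal (RCLike.ofReal ∘ fun j => e j * e j) * star U := by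
    rw [← dmul, ← hSU]
    exact (Matrix.PosSemidef.sqrt_mul_self _).symm
  set χ : ℝ → ℝ := fun x => if x = 0 then 0 else 1 with hχdef
  set g : ℝ → ℝ := fun x => if x = 0 then 0 else x⁻¹ with hgdef
  set B : Matrix ι ι ℂ := U * Matrix.diagonal (RCLike.ofReal ∘ fun j => g (e j)) * star U
    with hBdef
  set P : Matrix ι ι ℂ := U * Matrix.diagonal (RCLike.ofReal ∘ fun j => χ (e j)) * star U
    with hPdef
  have dUd_congr : ∀ a b : ι → ℝ, (∀ j, a j = b j) →
      U * Matrix.diagonal ((RCLike.ofReal ∘ a) : ι → ℂ) * star U =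
        U * Matrix.diagonal ((RCLike.ofReal ∘ b) : ι → ℂ) * star U := by
    intro a b hab
    rw [funext hab]
  have dUd_zero : ∀ a : ι → ℝ, (∀ j, a j = 0) →
      U * Matrix.diagonal ((RCLike.ofReal ∘ a) : ι → ℂ) * star U = 0 := by
    intro a ha
    rw [funext ha]
    rw [done0, Matrix.mul_zero, Matrix.zero_mul]
  have hBS : B * S = P := by
    rw [hBdef, hSU, dmul]
    refine (dUd_congr _ (fun j => χ (e j)) ?_).trans hPdef.symm
    intro j
    by_cases hx : e j = 0
    · simp [hgdef, hχdef, hx]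
    · simp only [hgdef, hχdef, hx, if_false]
      exact inv_mul_cancel₀ hx
  have hone : (1 : Matrix ι ι ℂ) - P =
      U * Matrix.diagonal ((RCLike.ofReal ∘ fun j => 1 - χ (e j)) : ι → ℂ) * star U := by
    have h1' : (1 : Matrix ι ι ℂ) =
        U * Matrix.diagonal ((RCLike.ofReal ∘ fun _ : ι => (1:ℝ)) : ι → ℂ) * star U := by
      rw [done1, Matrix.mul_one, hU2]
    rw [hPdef, h1', ← Matrix.sub_mul, ← Matrix.mul_sub, Matrix.diagonal_sub]
    have hfun : (fun i => ((RCLike.ofReal ∘ fun _ : ι => (1:ℝ)) : ι → ℂ) i -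
        ((RCLike.ofReal ∘ fun j => χ (e j)) : ι → ℂ) i) =
        ((RCLike.ofReal ∘ fun j => 1 - χ (e j)) : ι → ℂ) := by
      funext j
      simp [Function.comp]
    rw [hfun]
  have hzero2 : (Cᴴ * C) * (1 - P) = 0 := by
    rw [hCC, hone, dmul]
    apply dUd_zero
    intro j
    by_cases hx : e j = 0 <;> simp [hχdef, hx]
  have hCP : C * P = C := by
    have hzero : C * (1 - P) = 0 := by
      rw [← Matrix.conjTranspose_mul_self_eq_zero]
      have hherm : (1 - P)ᴴ = 1 - P := by
        rw [Matrix.conjTranspose_sub, Matrix.conjTranspose_one, hPdef, dherm]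
      rw [Matrix.conjTranspose_mul, hherm]
      calc (1 - P) * Cᴴ * (C * (1 - P))
          = (1 - P) * ((Cᴴ * C) * (1 - P)) := by simp only [Matrix.mul_assoc]
        _ = (1 - P) * 0 := by rw [hzero2]
        _ = 0 := Matrix.mul_zero _
    have h' := hzero
    rw [Matrix.mul_sub, Matrix.mul_one, sub_eq_zero] at h'
    exact h'.symm
  refine ⟨C * B, ?_, ?_⟩
  · rw [Matrix.mul_assoc, hBS, hCP]
  · rw [Matrix.mul_assoc C B S, hBS, hCP]
    have hBherm : Bᴴ = B := by rw [hBdef]; exact dherm _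
    have hWH : (C * B)ᴴ = B * Cᴴ := by
      rw [Matrix.conjTranspose_mul, hBherm]
    rw [hWH, ← Matrix.mul_assoc]
    have hYpsd : (C * B * Cᴴ).PosSemidef := by
      have hgnn : ∀ j, 0 ≤ g (e j) := by
        intro j
        by_cases hx : e j = 0
        · simp [hgdef, hx]
        · have h0 : 0 ≤ e j := hS.eigenvalues_nonneg j
          simp only [hgdef, hx, if_false]
          positivity
      have hBpsd : B.PosSemidef := by rw [hBdef]; exact dpsd _ hgnn
      exact hBpsd.mul_mul_conjTranspose_same C
    have hBSB : B * (Cᴴ * C) * B = P := by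
      rw [hBdef, hCC, dmul, dmul]
      refine (dUd_congr _ (fun j => χ (e j)) ?_).trans hPdef.symm
      intro j
      by_cases hx : e j = 0
      · simp [hgdef, hχdef, hx]
      · simp only [hgdef, hχdef, hx, if_false]
        field_simp
    have hYsq : (C * B * Cᴴ) ^ 2 = Cᴴᴴ * Cᴴ := by
      rw [Matrix.conjTranspose_conjTranspose, pow_two]
      calc C * B * Cᴴ * (C * B * Cᴴ)
          = C * (B * (Cᴴ * C) * B) * Cᴴ := by simp only [Matrix.mul_assoc]
        _ = C * P * Cᴴ := by rw [hBSB]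
        _ = C * Cᴴ := by rw [hCP]
    exact hYpsd.eq_sqrt_of_sq_eq _ hYsq

lemma posSemidef_fromBlocks_zero {S : Matrix ι ι ℂ} (hS : S.PosSemidef) :
    (Matrix.fromBlocks S 0 0 (0 : Matrix ι ι ℂ)).PosSemidef := by
  have key : (Matrix.fromRows (1 : Matrix ι ι ℂ) (0 : Matrix ι ι ℂ)) * S *
      (Matrix.fromRows (1 : Matrix ι ι ℂ) (0 : Matrix ι ι ℂ))ᴴ =
      Matrix.fromBlocks S 0 0 (0 : Matrix ι ι ℂ) := by
    rw [Matrix.conjTranspose_fromRows_eq_fromCols_conjTranspose, Matrix.mul_assoc,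
      Matrix.mul_fromCols, Matrix.fromRows_mul_fromCols]
    simp
  rw [← key]
  exact hS.mul_mul_conjTranspose_same _

/-- The block matrix `[[|Cᴴ|, C], [Cᴴ, |C|]]` is positive semidefinite. -/
lemma posSemidef_fromBlocks_abs (C : Matrix ι ι ℂ) :
    (Matrix.fromBlocks (Matrix.posSemidef_conjTranspose_mul_self Cᴴ).sqrt C
      Cᴴ (Matrix.posSemidef_conjTranspose_mul_self C).sqrt).PosSemidef := by
  obtain ⟨W, hW1, hW2⟩ := exists_polar C
  set S := (Matrix.posSemidef_conjTranspose_mul_self C).sqrt with hSdef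
  have hSherm : Sᴴ = S := (Matrix.posSemidef_conjTranspose_mul_self C).posSemidef_sqrt.1
  have hSW : S * Wᴴ = Cᴴ := by
    rw [← hSherm, ← Matrix.conjTranspose_mul, hW1]
  have key : (Matrix.fromBlocks W 0 1 0) * (Matrix.fromBlocks S 0 0 0) *
      (Matrix.fromBlocks W 0 1 0)ᴴ =
      Matrix.fromBlocks (Matrix.posSemidef_conjTranspose_mul_self Cᴴ).sqrt C Cᴴ S := by
    rw [Matrix.fromBlocks_conjTranspose, Matrix.fromBlocks_multiply,
      Matrix.fromBlocks_multiply]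
    simp only [Matrix.mul_zero, Matrix.zero_mul, Matrix.mul_one, Matrix.one_mul,
      Matrix.conjTranspose_zero, Matrix.conjTranspose_one, add_zero, zero_add]
    rw [hSW, hW2, hW1]
  rw [← key]
  exact (posSemidef_fromBlocks_zero
    (Matrix.posSemidef_conjTranspose_mul_self C).posSemidef_sqrt).mul_mul_conjTranspose_same _

end polar

section spec

variable {n : ℕ}

lemma condExpQ_eq_genE (i : Fin n) (X : Mq n) :
    condExpQ i X = genE (fun a => a i) (fun a c => Function.update a i c) X := rfl

def val2 (i : Fin n) : ((Fin n → Fin 2) ⊕ (Fin n → Fin 2)) → Fin 2 :=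
  Sum.elim (fun a => a i) (fun a => a i)

def upd2 (i : Fin n) : ((Fin n → Fin 2) ⊕ (Fin n → Fin 2)) → Fin 2 →
    ((Fin n → Fin 2) ⊕ (Fin n → Fin 2)) :=
  fun p c => Sum.map (fun a => Function.update a i c) (fun a => Function.update a i c) p

lemma val2_upd2 (i : Fin n) : ∀ p c, val2 i (upd2 i p c) = c := by
  rintro (a | a) c <;> simp [val2, upd2]

lemma upd2_upd2 (i : Fin n) : ∀ p c d, upd2 i (upd2 i p c) d = upd2 i p d := by
  rintro (a | a) c d <;> simp [upd2, Function.update_idem]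

lemma upd2_val2 (i : Fin n) : ∀ p, upd2 i p (val2 i p) = p := by
  rintro (a | a) <;> simp [upd2, val2, Function.update_eq_self]

lemma genE2_fromBlocks (i : Fin n) (A B C D : Mq n) :
    genE (val2 i) (upd2 i) (Matrix.fromBlocks A B C D) =
      Matrix.fromBlocks (condExpQ i A) (condExpQ i B) (condExpQ i C) (condExpQ i D) := by
  ext p q
  cases p <;> cases q <;> rfl

lemma key_i (i : Fin n) (C : Mq n) :
    (Cᴴ * condExpQ i C).trace.re + (C * condExpQ i Cᴴ).trace.re ≤
      (mAbs C * condExpQ i (mAbs C)).trace.re +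
        (mAbs Cᴴ * condExpQ i (mAbs Cᴴ)).trace.re := by
  classical
  set A := mAbs Cᴴ with hA
  set Bm := mAbs C with hBm
  have hM : (Matrix.fromBlocks A C Cᴴ Bm).PosSemidef := posSemidef_fromBlocks_abs C
  set M := Matrix.fromBlocks A C Cᴴ Bm with hMdef
  have hN : (genE (val2 i) (upd2 i) M).PosSemidef :=
    genE_posSemidef _ _ (val2_upd2 i) (upd2_upd2 i) (upd2_val2 i) hM
  have hMm : (Matrix.fromBlocks A (-C) (-Cᴴ) Bm).PosSemidef := by
    have hD := hM.mul_mul_conjTranspose_same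
      (Matrix.fromBlocks 1 0 0 (-1) :
        Matrix ((Fin n → Fin 2) ⊕ (Fin n → Fin 2)) ((Fin n → Fin 2) ⊕ (Fin n → Fin 2)) ℂ)
    have hcomp : (Matrix.fromBlocks 1 0 0 (-1) :
        Matrix ((Fin n → Fin 2) ⊕ (Fin n → Fin 2)) ((Fin n → Fin 2) ⊕ (Fin n → Fin 2)) ℂ) * M *
        (Matrix.fromBlocks 1 0 0 (-1) :
        Matrix ((Fin n → Fin 2) ⊕ (Fin n → Fin 2)) ((Fin n → Fin 2) ⊕ (Fin n → Fin 2)) ℂ)ᴴ =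
        Matrix.fromBlocks A (-C) (-Cᴴ) Bm := by
      rw [hMdef, Matrix.fromBlocks_conjTranspose, Matrix.fromBlocks_multiply,
        Matrix.fromBlocks_multiply]
      simp
    rwa [hcomp] at hD
  have h0 : 0 ≤ ((Matrix.fromBlocks A (-C) (-Cᴴ) Bm) * genE (val2 i) (upd2 i) M).trace.re :=
    trace_mul_re_nonneg hMm hN
  rw [hMdef, genE2_fromBlocks, Matrix.fromBlocks_multiply, trace_fromBlocks,
    Matrix.trace_add, Matrix.trace_add] at h0
  simp only [Matrix.neg_mul, Matrix.trace_neg, Complex.add_re, Complex.neg_re] at h0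
  linarith

end spec

end DirichletAux

/-- Lemma 3 of the paper: `⟨C, K_n C⟩ + ⟨C†, K_n C†⟩ ≥ ⟨|C|, K_n |C|⟩ + ⟨|C†|, K_n |C†|⟩`. -/
theorem dirichlet_form_abs (n : ℕ) (hn : 1 ≤ n) (C : Mq n) :
    (qInner (mAbs C) (Kq n (mAbs C))).re + (qInner (mAbs Cᴴ) (Kq n (mAbs Cᴴ))).re ≤
      (qInner C (Kq n C)).re + (qInner Cᴴ (Kq n Cᴴ)).re := by
  classical
  have expand : ∀ X : Mq n, qInner X (Kq n X) =
      ∑ i : Fin n, (qInner X X - qInner X (condExpQ i X)) := by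
    intro X
    simp only [Kq, qInner, qTau]
    rw [Finset.mul_sum, Matrix.trace_sum, Finset.mul_sum]
    refine Finset.sum_congr rfl fun j _ => ?_
    rw [Matrix.mul_sub, Matrix.trace_sub, mul_sub]
  have habs : ∀ X : Mq n, qInner (mAbs X) (mAbs X) = qInner X X := by
    intro X
    have h1 : (mAbs X)ᴴ = mAbs X :=
      (Matrix.posSemidef_conjTranspose_mul_self X).posSemidef_sqrt.1
    have h2 : mAbs X * mAbs X = Xᴴ * X :=
      (Matrix.posSemidef_conjTranspose_mul_self X).sqrt_mul_self
    simp only [qInner]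
    rw [h1, h2]
  have hq : ∀ X Y : Mq n, (qInner X Y).re = ((2:ℝ)^n)⁻¹ * ((Xᴴ * Y).trace.re) := by
    intro X Y
    simp only [qInner, qTau]
    rw [show ((2:ℂ)^n)⁻¹ = ((((2:ℝ)^n)⁻¹ : ℝ) : ℂ) by push_cast; ring,
      Complex.re_ofReal_mul]
  rw [expand (mAbs C), expand (mAbs Cᴴ), expand C, expand Cᴴ]
  simp only [Complex.re_sum, Complex.sub_re]
  rw [← Finset.sum_add_distrib, ← Finset.sum_add_distrib]
  refine Finset.sum_le_sum fun i _ => ?_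
  have h1C : (mAbs C)ᴴ = mAbs C :=
    (Matrix.posSemidef_conjTranspose_mul_self C).posSemidef_sqrt.1
  have h1Ch : (mAbs Cᴴ)ᴴ = mAbs Cᴴ :=
    (Matrix.posSemidef_conjTranspose_mul_self Cᴴ).posSemidef_sqrt.1
  rw [habs C, habs Cᴴ]
  simp only [hq, h1C, h1Ch, Matrix.conjTranspose_conjTranspose]
  have ht : (0:ℝ) ≤ ((2:ℝ)^n)⁻¹ := by positivity
  have hk := DirichletAux.key_i i C
  have hmul := mul_le_mul_of_nonneg_left hk ht
  rw [mul_add, mul_add] at hmul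
  linarith

end
end

section
/- The function φ : [0, ln 2] → ℝ defined by φ(ξ) = 1/2 − √(h^{−1}(ln 2 − ξ)·(1 − h^{−1}(ln 2 − ξ))) is convex and monotone increasing on [0, ln 2]. Equivalently, in the parametrization ξ = ln 2 − h(x) with x ∈ [0, 1/2], φ(ξ) = 1/2 − √(x(1−x)). -/
noncomputable section

open scoped Matrix ComplexOrder

section PhiHelpers

open Set

lemma binEnt_continuous : Continuous binEnt := by
  have h1 : Continuous fun s : ℝ => s * Real.log s := Real.continuous_mul_log
  have h2 : Continuous fun s : ℝ => (1 - s) * Real.log (1 - s) :=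
    h1.comp (continuous_const.sub continuous_id)
  exact h1.neg.sub h2

lemma binEnt_hasDerivAt {x : ℝ} (h0 : 0 < x) (h1 : x < 1) :
    HasDerivAt binEnt (Real.log (1 - x) - Real.log x) x := by
  have h1' : (1 : ℝ) - x ≠ 0 := by linarith
  have hA : HasDerivAt (fun s : ℝ => s * Real.log s) (Real.log x + 1) x :=
    Real.hasDerivAt_mul_log h0.ne'
  have hinner : HasDerivAt (fun s : ℝ => 1 - s) (-1) x := by
    simpa using (hasDerivAt_id x).const_sub 1
  have hB : HasDerivAt (fun s : ℝ => (1 - s) * Real.log (1 - s))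
      ((Real.log (1 - x) + 1) * (-1)) x :=
    (Real.hasDerivAt_mul_log h1').comp x hinner
  have := hA.neg.sub hB
  refine this.congr_deriv ?_
  ring

lemma binEnt_zero : binEnt 0 = 0 := by simp [binEnt]

lemma binEnt_half : binEnt (1 / 2) = Real.log 2 := by
  have : Real.log (1 / 2 : ℝ) = -Real.log 2 := by
    rw [one_div, Real.log_inv]
  norm_num [binEnt, this]
  ring

lemma binEnt_strictMono : StrictMonoOn binEnt (Set.Icc 0 (1 / 2)) := by
  apply strictMonoOn_of_deriv_pos (convex_Icc _ _) binEnt_continuous.continuousOn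
  intro x hx
  rw [interior_Icc] at hx
  rw [(binEnt_hasDerivAt hx.1 (by linarith [hx.2])).deriv]
  have := Real.log_lt_log hx.1 (by linarith [hx.2] : x < 1 - x)
  linarith

lemma binEnt_surj {y : ℝ} (hy : y ∈ Set.Icc 0 (Real.log 2)) :
    ∃ x ∈ Set.Icc (0 : ℝ) (1 / 2), binEnt x = y := by
  have h := intermediate_value_Icc (by norm_num : (0 : ℝ) ≤ 1 / 2)
    binEnt_continuous.continuousOn
  have hy' : y ∈ Set.Icc (binEnt 0) (binEnt (1 / 2)) := by
    rw [binEnt_zero, binEnt_half]; exact hy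
  obtain ⟨x, hx, hxy⟩ := h hy'
  exact ⟨x, hx, hxy⟩

lemma binEntInv_mem {y : ℝ} (hy : y ∈ Set.Icc 0 (Real.log 2)) :
    binEntInv y ∈ Set.Icc (0 : ℝ) (1 / 2) :=
  Function.invFunOn_mem (binEnt_surj hy)

lemma binEnt_binEntInv {y : ℝ} (hy : y ∈ Set.Icc 0 (Real.log 2)) :
    binEnt (binEntInv y) = y :=
  Function.invFunOn_eq (binEnt_surj hy)

lemma binEntInv_binEnt {x : ℝ} (hx : x ∈ Set.Icc (0 : ℝ) (1 / 2)) :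
    binEntInv (binEnt x) = x :=
  binEnt_strictMono.injOn.leftInvOn_invFunOn hx

/-- The parametrizing point `x = h⁻¹(ln 2 − ξ)`. -/
def XQ (ξ : ℝ) : ℝ := binEntInv (Real.log 2 - ξ)

lemma XQ_mem {ξ : ℝ} (hξ : ξ ∈ Set.Icc 0 (Real.log 2)) :
    XQ ξ ∈ Set.Icc (0 : ℝ) (1 / 2) :=
  binEntInv_mem ⟨by linarith [hξ.2], by linarith [hξ.1]⟩

lemma binEnt_XQ {ξ : ℝ} (hξ : ξ ∈ Set.Icc 0 (Real.log 2)) :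
    binEnt (XQ ξ) = Real.log 2 - ξ :=
  binEnt_binEntInv ⟨by linarith [hξ.2], by linarith [hξ.1]⟩

lemma phiF_eq_XQ (ξ : ℝ) : phiF ξ = 1 / 2 - Real.sqrt (XQ ξ * (1 - XQ ξ)) := rfl

lemma XQ_lt {ξ₁ ξ₂ : ℝ} (h1 : ξ₁ ∈ Set.Icc 0 (Real.log 2))
    (h2 : ξ₂ ∈ Set.Icc 0 (Real.log 2)) (hlt : ξ₁ < ξ₂) : XQ ξ₂ < XQ ξ₁ := by
  by_contra hcon
  push_neg at hcon
  have hb1 := binEnt_XQ h1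
  have hb2 := binEnt_XQ h2
  rcases eq_or_lt_of_le hcon with heq | hlt'
  · rw [heq] at hb1; linarith [hb1, hb2]
  · have := binEnt_strictMono (XQ_mem h1) (XQ_mem h2) hlt'
    rw [hb1, hb2] at this
    linarith

lemma log_sub_hasDerivAt {x : ℝ} (h0 : 0 < x) (h1 : x < 1) :
    HasDerivAt (fun s : ℝ => Real.log (1 - s) - Real.log s)
      (-(1 / (1 - x)) - 1 / x) x := by
  have h1' : (1 : ℝ) - x ≠ 0 := by linarith
  have hinner : HasDerivAt (fun s : ℝ => 1 - s) (-1) x := by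
    simpa using (hasDerivAt_id x).const_sub 1
  have hl : HasDerivAt (fun s : ℝ => Real.log (1 - s)) ((1 - x)⁻¹ * (-1)) x :=
    (Real.hasDerivAt_log h1').comp x hinner
  have hl2 : HasDerivAt Real.log x⁻¹ x := Real.hasDerivAt_log h0.ne'
  have := hl.sub hl2
  refine this.congr_deriv ?_
  field_simp

/-- Key inequality: `ln((1−x)/x) ≥ 2(1−2x)` on `(0, 1/2]`. -/
lemma key_ineq {x : ℝ} (h0 : 0 < x) (hx : x ≤ 1 / 2) :
    2 * (1 - 2 * x) ≤ Real.log (1 - x) - Real.log x := by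
  set q : ℝ → ℝ := fun s => Real.log (1 - s) - Real.log s - 2 * (1 - 2 * s) with hq
  have hlin : ∀ s : ℝ, HasDerivAt (fun t : ℝ => 2 * (1 - 2 * t)) (-4) s := by
    intro s
    have h := (((hasDerivAt_id s).const_mul (2 : ℝ)).const_sub 1).const_mul (2 : ℝ)
    refine h.congr_deriv ?_
    norm_num
  have hqd : ∀ s : ℝ, 0 < s → s < 1 → HasDerivAt q (-(1 / (1 - s)) - 1 / s + 4) s := by
    intro s hs0 hs1
    have := (log_sub_hasDerivAt hs0 hs1).sub (hlin s)
    refine this.congr_deriv ?_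
    ring
  have hmem : ∀ s ∈ Set.Icc x (1 / 2 : ℝ), 0 < s ∧ s < 1 := fun s hs =>
    ⟨lt_of_lt_of_le h0 hs.1, by linarith [hs.2]⟩
  have hanti : AntitoneOn q (Set.Icc x (1 / 2)) := by
    apply antitoneOn_of_deriv_nonpos (convex_Icc _ _)
    · intro s hs
      obtain ⟨hs0, hs1⟩ := hmem s hs
      exact (hqd s hs0 hs1).continuousAt.continuousWithinAt
    · intro s hs
      rw [interior_Icc] at hs
      obtain ⟨hs0, hs1⟩ := hmem s (Set.mem_Icc_of_Ioo hs)
      exact (hqd s hs0 hs1).differentiableAt.differentiableWithinAt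
    · intro s hs
      rw [interior_Icc] at hs
      obtain ⟨hs0, hs1⟩ := hmem s (Set.mem_Icc_of_Ioo hs)
      rw [(hqd s hs0 hs1).deriv]
      have h1s : 0 < 1 - s := by linarith
      have hkey : 4 ≤ 1 / (1 - s) + 1 / s := by
        rw [div_add_div _ _ h1s.ne' hs0.ne', le_div_iff₀ (mul_pos h1s hs0)]
        nlinarith [sq_nonneg (1 - 2 * s)]
      linarith
  have hle := hanti (Set.mem_Icc.mpr ⟨le_rfl, hx⟩) (Set.mem_Icc.mpr ⟨hx, le_rfl⟩) hx
  have hhalf : q (1 / 2) = 0 := by norm_num [hq]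
  rw [hhalf] at hle
  simp only [hq] at hle
  linarith

lemma sqrt_mul_hasDerivAt {x : ℝ} (h0 : 0 < x) (h1 : x < 1) :
    HasDerivAt (fun s : ℝ => Real.sqrt (s * (1 - s)))
      ((1 - 2 * x) / (2 * Real.sqrt (x * (1 - x)))) x := by
  have hv : HasDerivAt (fun s : ℝ => s * (1 - s)) (1 - 2 * x) x := by
    have := (hasDerivAt_id x).mul ((hasDerivAt_id x).const_sub 1)
    refine this.congr_deriv ?_
    simp only [id_eq]
    ring
  have hvne : x * (1 - x) ≠ 0 := (mul_pos h0 (by linarith)).ne'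
  have := (Real.hasDerivAt_sqrt hvne).comp x hv
  refine this.congr_deriv ?_
  field_simp

lemma F_hasDerivAt {x : ℝ} (h0 : 0 < x) (h1 : x < 1) :
    HasDerivAt (fun s : ℝ => 1 / 2 - Real.sqrt (s * (1 - s)))
      (-((1 - 2 * x) / (2 * Real.sqrt (x * (1 - x))))) x :=
  (sqrt_mul_hasDerivAt h0 h1).const_sub (1 / 2)

/-- `r(x) = (1−2x) / (2√(x(1−x)) ln((1−x)/x))`, the slope `dφ/dξ` in the parametrization. -/
def rQ (x : ℝ) : ℝ :=
  (1 - 2 * x) / (2 * Real.sqrt (x * (1 - x)) * (Real.log (1 - x) - Real.log x))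

lemma sqrt_pos_of_mem {x : ℝ} (h0 : 0 < x) (h1 : x < 1) :
    0 < Real.sqrt (x * (1 - x)) :=
  Real.sqrt_pos.mpr (mul_pos h0 (by linarith))

lemma log_sub_pos {x : ℝ} (h0 : 0 < x) (h2 : x < 1 / 2) :
    0 < Real.log (1 - x) - Real.log x :=
  sub_pos.mpr (Real.log_lt_log h0 (by linarith))

lemma rQ_pos {x : ℝ} (h0 : 0 < x) (h2 : x < 1 / 2) : 0 < rQ x :=
  div_pos (by linarith)
    (mul_pos (mul_pos two_pos (sqrt_pos_of_mem h0 (by linarith))) (log_sub_pos h0 h2))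

lemma numer_id (x S L : ℝ) (hS : 0 < S) (hx : 0 < x) (h1x : 0 < 1 - x)
    (hS2 : S ^ 2 = x * (1 - x)) :
    (-2 : ℝ) * (2 * S * L) -
        (1 - 2 * x) * (2 * ((1 - 2 * x) / (2 * S)) * L + 2 * S * (-(1 / (1 - x)) - 1 / x)) =
      (2 * (1 - 2 * x) - L) / S := by
  have hx' := hx.ne'
  have h1x' := h1x.ne'
  have hS' := hS.ne'
  field_simp
  linear_combination (2 - 4 * x - 4 * L * x * (1 - x)) * hS2

lemma rQ_antitone : AntitoneOn rQ (Set.Ioo (0 : ℝ) (1 / 2)) := by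
  have hD : ∀ x ∈ Set.Ioo (0 : ℝ) (1 / 2),
      HasDerivAt (fun s : ℝ =>
          2 * Real.sqrt (s * (1 - s)) * (Real.log (1 - s) - Real.log s))
        (2 * ((1 - 2 * x) / (2 * Real.sqrt (x * (1 - x)))) *
            (Real.log (1 - x) - Real.log x) +
          2 * Real.sqrt (x * (1 - x)) * (-(1 / (1 - x)) - 1 / x)) x := by
    intro x hx
    exact ((sqrt_mul_hasDerivAt hx.1 (by linarith [hx.2])).const_mul 2).mul
      (log_sub_hasDerivAt hx.1 (by linarith [hx.2]))
  have hN : ∀ x : ℝ, HasDerivAt (fun s : ℝ => 1 - 2 * s) (-2) x := by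
    intro x
    have h := ((hasDerivAt_id x).const_mul (2 : ℝ)).const_sub 1
    refine h.congr_deriv ?_; simp
  have hr : ∀ x ∈ Set.Ioo (0 : ℝ) (1 / 2),
      HasDerivAt rQ
        (((-2) * (2 * Real.sqrt (x * (1 - x)) * (Real.log (1 - x) - Real.log x)) -
            (1 - 2 * x) *
              (2 * ((1 - 2 * x) / (2 * Real.sqrt (x * (1 - x)))) *
                  (Real.log (1 - x) - Real.log x) +
                2 * Real.sqrt (x * (1 - x)) * (-(1 / (1 - x)) - 1 / x))) /
          (2 * Real.sqrt (x * (1 - x)) * (Real.log (1 - x) - Real.log x)) ^ 2) x := by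
    intro x hx
    have hDne : 2 * Real.sqrt (x * (1 - x)) * (Real.log (1 - x) - Real.log x) ≠ 0 :=
      (mul_pos (mul_pos two_pos (sqrt_pos_of_mem hx.1 (by linarith [hx.2])))
        (log_sub_pos hx.1 hx.2)).ne'
    exact (hN x).div (hD x hx) hDne
  apply antitoneOn_of_deriv_nonpos (convex_Ioo _ _)
  · intro x hx
    exact (hr x hx).continuousAt.continuousWithinAt
  · intro x hx
    rw [isOpen_Ioo.interior_eq] at hx
    exact (hr x hx).differentiableAt.differentiableWithinAt
  · intro x hx
    rw [isOpen_Ioo.interior_eq] at hx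
    rw [(hr x hx).deriv]
    have hx1 : x < 1 := by linarith [hx.2]
    have hS := sqrt_pos_of_mem hx.1 hx1
    have hL := log_sub_pos hx.1 hx.2
    have hS2 : Real.sqrt (x * (1 - x)) ^ 2 = x * (1 - x) :=
      Real.sq_sqrt (mul_pos hx.1 (by linarith)).le
    apply div_nonpos_of_nonpos_of_nonneg _ (sq_nonneg _)
    have hx0 : (0 : ℝ) < x := hx.1
    have h1x : (0 : ℝ) < 1 - x := by linarith
    set S := Real.sqrt (x * (1 - x)) with hSdef
    set L := Real.log (1 - x) - Real.log x with hLdef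
    have hkey := key_ineq hx.1 hx.2.le
    rw [← hLdef] at hkey
    have hid : (-2) * (2 * S * L) -
        (1 - 2 * x) * (2 * ((1 - 2 * x) / (2 * S)) * L + 2 * S * (-(1 / (1 - x)) - 1 / x)) =
        (2 * (1 - 2 * x) - L) / S :=
      numer_id x S L hS hx0 h1x hS2
    rw [hid]
    apply div_nonpos_of_nonpos_of_nonneg _ hS.le
    linarith

/-- The slope of `phiF` between two points equals `rQ` at an intermediate parameter. -/
lemma phiF_slope {ξ₁ ξ₂ : ℝ} (h1 : ξ₁ ∈ Set.Icc 0 (Real.log 2))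
    (h2 : ξ₂ ∈ Set.Icc 0 (Real.log 2)) (hlt : ξ₁ < ξ₂) :
    ∃ c ∈ Set.Ioo (XQ ξ₂) (XQ ξ₁),
      phiF ξ₂ - phiF ξ₁ = (ξ₂ - ξ₁) * rQ c := by
  have hab : XQ ξ₂ < XQ ξ₁ := XQ_lt h1 h2 hlt
  have ha := XQ_mem h2
  have hb := XQ_mem h1
  have hbounds : ∀ s ∈ Set.Ioo (XQ ξ₂) (XQ ξ₁), 0 < s ∧ s < 1 / 2 := fun s hs =>
    ⟨lt_of_le_of_lt ha.1 hs.1, lt_of_lt_of_le hs.2 hb.2⟩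
  have hFc : ContinuousOn (fun s : ℝ => 1 / 2 - Real.sqrt (s * (1 - s)))
      (Set.Icc (XQ ξ₂) (XQ ξ₁)) := by
    apply Continuous.continuousOn
    exact continuous_const.sub
      (Real.continuous_sqrt.comp (continuous_id.mul (continuous_const.sub continuous_id)))
  obtain ⟨c, hc, hceq⟩ := exists_ratio_hasDerivAt_eq_ratio_slope binEnt
    (fun s => Real.log (1 - s) - Real.log s) hab binEnt_continuous.continuousOn
    (fun s hs => binEnt_hasDerivAt (hbounds s hs).1 (by linarith [(hbounds s hs).2]))
    (fun s : ℝ => 1 / 2 - Real.sqrt (s * (1 - s)))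
    (fun s => -((1 - 2 * s) / (2 * Real.sqrt (s * (1 - s))))) hFc
    (fun s hs => F_hasDerivAt (hbounds s hs).1 (by linarith [(hbounds s hs).2]))
  refine ⟨c, hc, ?_⟩
  obtain ⟨hc0, hc2⟩ := hbounds c hc
  have hc1 : c < 1 := by linarith
  have hS := sqrt_pos_of_mem hc0 hc1
  have hL := log_sub_pos hc0 hc2
  have hbE1 := binEnt_XQ h1
  have hbE2 := binEnt_XQ h2
  have hφ1 : phiF ξ₁ = 1 / 2 - Real.sqrt (XQ ξ₁ * (1 - XQ ξ₁)) := rfl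
  have hφ2 : phiF ξ₂ = 1 / 2 - Real.sqrt (XQ ξ₂ * (1 - XQ ξ₂)) := rfl
  rw [hbE1, hbE2] at hceq
  have hceq2 : (phiF ξ₁ - phiF ξ₂) * (Real.log (1 - c) - Real.log c)
      = (ξ₂ - ξ₁) * (-((1 - 2 * c) / (2 * Real.sqrt (c * (1 - c))))) := by
    rw [hφ1, hφ2]
    linear_combination hceq
  rw [rQ, ← div_div, ← mul_div_assoc, eq_div_iff hL.ne']
  linear_combination -hceq2

end PhiHelpers

/-- Lemma 4 of the paper: `φ(ξ) = 1/2 − √(h⁻¹(ln 2 − ξ)(1 − h⁻¹(ln 2 − ξ)))` is convex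
and monotone increasing on `[0, ln 2]`; in the parametrization `ξ = ln 2 − h(x)` with
`x ∈ [0, 1/2]`, it equals `1/2 − √(x(1−x))`. -/
theorem phi_convex_monotone :
    ConvexOn ℝ (Set.Icc 0 (Real.log 2)) phiF ∧
      MonotoneOn phiF (Set.Icc 0 (Real.log 2)) ∧
      ∀ x ∈ Set.Icc (0 : ℝ) (1 / 2),
        phiF (Real.log 2 - binEnt x) = 1 / 2 - Real.sqrt (x * (1 - x)) := by
  have hparam : ∀ x ∈ Set.Icc (0 : ℝ) (1 / 2),
      phiF (Real.log 2 - binEnt x) = 1 / 2 - Real.sqrt (x * (1 - x)) := by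
    intro x hx
    have : binEntInv (Real.log 2 - (Real.log 2 - binEnt x)) = x := by
      rw [sub_sub_cancel]
      exact binEntInv_binEnt hx
    simp only [phiF, this]
  have hmono : MonotoneOn phiF (Set.Icc 0 (Real.log 2)) := by
    intro ξ₁ h1 ξ₂ h2 hle
    rcases eq_or_lt_of_le hle with heq | hlt
    · rw [heq]
    · obtain ⟨c, hc, heq⟩ := phiF_slope h1 h2 hlt
      have hc0 : 0 < c := lt_of_le_of_lt (XQ_mem h2).1 hc.1
      have hc2 : c < 1 / 2 := lt_of_lt_of_le hc.2 (XQ_mem h1).2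
      nlinarith [rQ_pos hc0 hc2]
  refine ⟨?_, hmono, hparam⟩
  rw [convexOn_iff_slope_mono_adjacent]
  refine ⟨convex_Icc _ _, ?_⟩
  intro x y z hx hz hxy hyz
  have hy : y ∈ Set.Icc 0 (Real.log 2) := ⟨le_trans hx.1 hxy.le, le_trans hyz.le hz.2⟩
  obtain ⟨c₁, hc₁, heq₁⟩ := phiF_slope hx hy hxy
  obtain ⟨c₂, hc₂, heq₂⟩ := phiF_slope hy hz hyz
  have hc₁mem : c₁ ∈ Set.Ioo (0 : ℝ) (1 / 2) :=
    ⟨lt_of_le_of_lt (XQ_mem hy).1 hc₁.1, lt_of_lt_of_le hc₁.2 (XQ_mem hx).2⟩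
  have hc₂mem : c₂ ∈ Set.Ioo (0 : ℝ) (1 / 2) :=
    ⟨lt_of_le_of_lt (XQ_mem hz).1 hc₂.1, lt_of_lt_of_le hc₂.2 (XQ_mem hy).2⟩
  have hcc : c₂ ≤ c₁ := le_of_lt (lt_trans hc₂.2 hc₁.1)
  have hr := rQ_antitone hc₂mem hc₁mem hcc
  have hyx : 0 < y - x := by linarith
  have hzy : 0 < z - y := by linarith
  rw [heq₁, heq₂, mul_comm (y - x), mul_comm (z - y), mul_div_assoc, mul_div_assoc,
    div_self hyx.ne', div_self hzy.ne', mul_one, mul_one]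
  exact hr

end
end

section
/- The function α : (0, ln 2] → ℝ defined by α(ξ) = (1/ξ)(1/2 − √(h^{−1}(ln 2 − ξ)·(1 − h^{−1}(ln 2 − ξ)))) is monotone increasing on (0, ln 2]. -/
noncomputable section

open scoped Matrix ComplexOrder

namespace AlphaAux

open Real Set

/-- `artanh`. -/
def aF (u : ℝ) : ℝ := (Real.log (1 + u) - Real.log (1 - u)) / 2

def wF (u : ℝ) : ℝ := Real.sqrt (1 - u ^ 2)

def fF (u : ℝ) : ℝ := 1 - Real.sqrt (1 - u ^ 2)

def gF (u : ℝ) : ℝ := Real.log 2 - binEnt ((1 - u) / 2)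

def qF (u : ℝ) : ℝ := wF u * aF u / u

lemma haF {u : ℝ} (h1 : -1 < u) (h2 : u < 1) : HasDerivAt aF (1 / (1 - u ^ 2)) u := by
  have h1' : (0:ℝ) < 1 + u := by linarith
  have h2' : (0:ℝ) < 1 - u := by linarith
  have c1 : HasDerivAt (fun v : ℝ => 1 + v) 1 u := by
    simpa using (hasDerivAt_id u).const_add (1:ℝ)
  have c2 : HasDerivAt (fun v : ℝ => 1 - v) (-1) u := by
    simpa using (hasDerivAt_id u).const_sub (1:ℝ)
  have d1 : HasDerivAt (fun v : ℝ => Real.log (1 + v)) (1 / (1 + u)) u := by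
    simpa using c1.log h1'.ne'
  have d2 : HasDerivAt (fun v : ℝ => Real.log (1 - v)) (-1 / (1 - u)) u := by
    simpa using c2.log h2'.ne'
  have key := (d1.sub d2).div_const 2
  refine key.congr_deriv ?_
  have hp : (1:ℝ) - u ^ 2 ≠ 0 := by nlinarith
  field_simp
  ring

lemma artanh_ge {u : ℝ} (h0 : 0 ≤ u) (h1 : u < 1) : u ≤ aF u := by
  have mono : MonotoneOn (fun t => aF t - t) (Icc 0 u) := by
    apply monotoneOn_of_hasDerivWithinAt_nonneg (convex_Icc 0 u)
      (f' := fun t => 1 / (1 - t ^ 2) - 1)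
    · intro t ht
      exact ((haF (by linarith [ht.1] : (-1:ℝ) < t) (lt_of_le_of_lt ht.2 h1)).sub
        (hasDerivAt_id t)).continuousAt.continuousWithinAt
    · intro t ht
      rw [interior_Icc] at ht
      exact ((haF (by linarith [ht.1]) (lt_trans ht.2 h1)).sub
        (hasDerivAt_id t)).hasDerivWithinAt
    · intro t ht
      rw [interior_Icc] at ht
      have ht1 : t < 1 := lt_trans ht.2 h1
      have hp : 0 < 1 - t ^ 2 := by nlinarith [ht.1]
      have h2 : (1:ℝ) ≤ 1 / (1 - t ^ 2) := by
        rw [le_div_iff₀ hp]; nlinarith [ht.1]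
      linarith
  have h := mono (⟨le_refl _, h0⟩ : (0:ℝ) ∈ Icc 0 u) (⟨h0, le_refl _⟩ : u ∈ Icc 0 u) h0
  have ha0 : aF 0 = 0 := by simp [aF]
  simp only [ha0] at h
  linarith

lemma aF_pos {u : ℝ} (h0 : 0 < u) (h1 : u < 1) : 0 < aF u :=
  lt_of_lt_of_le h0 (artanh_ge h0.le h1)

lemma wF_pos {u : ℝ} (h1 : -1 < u) (h2 : u < 1) : 0 < wF u :=
  Real.sqrt_pos.mpr (by nlinarith)

lemma qF_pos {u : ℝ} (h0 : 0 < u) (h1 : u < 1) : 0 < qF u :=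
  div_pos (mul_pos (wF_pos (by linarith) h1) (aF_pos h0 h1)) h0

lemma hfF {u : ℝ} (h1 : -1 < u) (h2 : u < 1) : HasDerivAt fF (u / wF u) u := by
  have hp : 0 < 1 - u ^ 2 := by nlinarith
  have hw : 0 < wF u := wF_pos h1 h2
  have hinner : HasDerivAt (fun x : ℝ => 1 - x ^ 2) (-(2 * u)) u := by
    simpa using (hasDerivAt_pow 2 u).const_sub (1:ℝ)
  have hs := hinner.sqrt hp.ne'
  have key := hs.const_sub (1:ℝ)
  refine key.congr_deriv ?_
  unfold wF
  field_simp

lemma binEnt_cont : Continuous binEnt := by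
  have h := Real.continuous_mul_log
  exact (h.neg).sub (h.comp (continuous_const.sub continuous_id))

lemma fF_cont : Continuous fF := by
  unfold fF
  exact continuous_const.sub (Real.continuous_sqrt.comp
    (continuous_const.sub (continuous_pow 2)))

lemma gF_cont : Continuous gF := by
  unfold gF
  exact continuous_const.sub (binEnt_cont.comp (by continuity))

lemma binEnt_zero : binEnt 0 = 0 := by simp [binEnt]

lemma binEnt_half : binEnt (1 / 2) = Real.log 2 := by
  unfold binEnt
  rw [show (1:ℝ) - 1 / 2 = 1 / 2 by norm_num,
    show Real.log (1 / 2) = -Real.log 2 by rw [one_div, Real.log_inv]]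
  ring

lemma hbinEnt {s : ℝ} (hs : 0 < s) (hs1 : s < 1) :
    HasDerivAt binEnt (Real.log (1 - s) - Real.log s) s := by
  have h1s : (0:ℝ) < 1 - s := by linarith
  have m1 := Real.hasDerivAt_mul_log hs.ne'
  have c : HasDerivAt (fun x : ℝ => 1 - x) (-1) s := by
    simpa using (hasDerivAt_id s).const_sub (1:ℝ)
  have m2 : HasDerivAt (fun x : ℝ => (1 - x) * Real.log (1 - x))
      ((Real.log (1 - s) + 1) * (-1)) s :=
    (Real.hasDerivAt_mul_log h1s.ne').comp s c
  have key : HasDerivAt binEnt (-(Real.log s + 1) - (Real.log (1 - s) + 1) * (-1)) s :=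
    (m1.neg).sub m2
  convert key using 1
  ring

lemma hgF {u : ℝ} (h0 : 0 < u) (h1 : u < 1) : HasDerivAt gF (aF u) u := by
  have hs : 0 < (1 - u) / 2 := by linarith
  have hs1 : (1 - u) / 2 < 1 := by linarith
  have c : HasDerivAt (fun v : ℝ => (1 - v) / 2) (-(1 / 2)) u := by
    have := ((hasDerivAt_id u).const_sub (1:ℝ)).div_const 2
    exact this.congr_deriv (by norm_num)
  have m : HasDerivAt (fun v : ℝ => binEnt ((1 - v) / 2))
      ((Real.log (1 - (1 - u) / 2) - Real.log ((1 - u) / 2)) * (-(1 / 2))) u :=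
    (hbinEnt hs hs1).comp (h₂ := binEnt) u c
  have key : HasDerivAt gF
      (0 - (Real.log (1 - (1 - u) / 2) - Real.log ((1 - u) / 2)) * (-(1 / 2))) u :=
    (hasDerivAt_const u (Real.log 2)).sub m
  refine key.congr_deriv ?_
  rw [show (1:ℝ) - (1 - u) / 2 = (1 + u) / 2 by ring]
  have e1 : Real.log ((1 + u) / 2) = Real.log (1 + u) - Real.log 2 :=
    Real.log_div (by linarith) two_ne_zero
  have e2 : Real.log ((1 - u) / 2) = Real.log (1 - u) - Real.log 2 :=
    Real.log_div (by linarith) two_ne_zero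
  rw [e1, e2]
  unfold aF
  ring

lemma hqF {t : ℝ} (h1 : 0 < t) (h2 : t < 1) :
    HasDerivAt qF ((t - aF t) / (wF t * t ^ 2)) t := by
  have hp : 0 < 1 - t ^ 2 := by nlinarith
  have hw : 0 < wF t := wF_pos (by linarith) h2
  have hw2 : wF t ^ 2 = 1 - t ^ 2 := Real.sq_sqrt hp.le
  have hinner : HasDerivAt (fun x : ℝ => 1 - x ^ 2) (-(2 * t)) t := by
    simpa using (hasDerivAt_pow 2 t).const_sub (1:ℝ)
  have hwd : HasDerivAt wF (-(2 * t) / (2 * wF t)) t := hinner.sqrt hp.ne'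
  have had := haF (by linarith) h2
  have key := (hwd.mul had).div (hasDerivAt_id t) h1.ne'
  refine key.congr_deriv ?_
  simp only [id, Pi.mul_apply]
  rw [← hw2]
  field_simp
  linear_combination (-aF t) * hw2

lemma qF_anti {t u : ℝ} (ht : t ∈ Ioo (0:ℝ) 1) (hu : u ∈ Ioo (0:ℝ) 1) (htu : t ≤ u) :
    qF u ≤ qF t := by
  have anti : AntitoneOn qF (Ioo 0 1) := by
    apply antitoneOn_of_hasDerivWithinAt_nonpos (convex_Ioo 0 1)
      (f' := fun t => (t - aF t) / (wF t * t ^ 2))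
    · intro x hx
      exact (hqF hx.1 hx.2).continuousAt.continuousWithinAt
    · intro x hx
      rw [interior_Ioo] at hx
      exact (hqF hx.1 hx.2).hasDerivWithinAt
    · intro x hx
      rw [interior_Ioo] at hx
      apply div_nonpos_of_nonpos_of_nonneg
      · linarith [artanh_ge hx.1.le hx.2]
      · exact mul_nonneg (wF_pos (by linarith [hx.1]) hx.2).le (sq_nonneg x)
  exact anti ht hu htu

lemma key_ineq {u v : ℝ} (hu : 0 < u) (huv : u ≤ v) (hv : v ≤ 1)
    (hGu : 0 ≤ gF u) (hG : gF u ≤ gF v) : fF u * gF v ≤ fF v * gF u := by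
  rcases eq_or_lt_of_le huv with rfl | huv'
  · exact le_of_eq (by ring)
  have hu1 : u < 1 := lt_of_lt_of_le huv' hv
  have hq : 0 < qF u := qF_pos hu hu1
  have humem : u ∈ Ioo (0:ℝ) 1 := ⟨hu, hu1⟩
  -- step (a): qF u * fF u ≤ gF u
  have ia : qF u * fF u ≤ gF u := by
    have mono : MonotoneOn (fun t => gF t - qF u * fF t) (Icc 0 u) := by
      apply monotoneOn_of_hasDerivWithinAt_nonneg (convex_Icc 0 u)
        (f' := fun t => aF t - qF u * (t / wF t))
      · exact (gF_cont.sub (continuous_const.mul fF_cont)).continuousOn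
      · intro t ht
        rw [interior_Icc] at ht
        exact ((hgF ht.1 (lt_trans ht.2 hu1)).sub
          ((hfF (by linarith [ht.1]) (lt_trans ht.2 hu1)).const_mul (qF u))).hasDerivWithinAt
      · intro t ht
        rw [interior_Icc] at ht
        have ht1 : t < 1 := lt_trans ht.2 hu1
        have hwt : 0 < wF t := wF_pos (by linarith [ht.1]) ht1
        have hqt : qF u ≤ qF t := qF_anti ⟨ht.1, ht1⟩ humem ht.2.le
        have hmul : qF u * (t / wF t) ≤ qF t * (t / wF t) :=
          mul_le_mul_of_nonneg_right hqt (div_nonneg ht.1.le hwt.le)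
        have heq : qF t * (t / wF t) = aF t := by
          unfold qF
          field_simp [hwt.ne', ht.1.ne']
        linarith [hmul, heq.le, heq.ge]
    have h := mono (⟨le_refl _, hu.le⟩ : (0:ℝ) ∈ Icc 0 u)
      (⟨hu.le, le_refl _⟩ : u ∈ Icc 0 u) hu.le
    have hg0 : gF 0 = 0 := by
      unfold gF
      rw [show ((1:ℝ) - 0) / 2 = 1 / 2 by norm_num, binEnt_half]; ring
    have hf0 : fF 0 = 0 := by simp [fF]
    simp only [hg0, hf0] at h
    linarith
  -- step (b): gF v - gF u ≤ qF u * (fF v - fF u)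
  have ib : gF v - gF u ≤ qF u * (fF v - fF u) := by
    have mono : MonotoneOn (fun t => qF u * fF t - gF t) (Icc u v) := by
      apply monotoneOn_of_hasDerivWithinAt_nonneg (convex_Icc u v)
        (f' := fun t => qF u * (t / wF t) - aF t)
      · exact ((continuous_const.mul fF_cont).sub gF_cont).continuousOn
      · intro t ht
        rw [interior_Icc] at ht
        have ht0 : 0 < t := lt_trans hu ht.1
        have ht1 : t < 1 := lt_of_lt_of_le ht.2 hv
        exact (((hfF (by linarith) ht1).const_mul (qF u)).sub (hgF ht0 ht1)).hasDerivWithinAt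
      · intro t ht
        rw [interior_Icc] at ht
        have ht0 : 0 < t := lt_trans hu ht.1
        have ht1 : t < 1 := lt_of_lt_of_le ht.2 hv
        have hwt : 0 < wF t := wF_pos (by linarith) ht1
        have hqt : qF t ≤ qF u := qF_anti humem ⟨ht0, ht1⟩ ht.1.le
        have hmul : qF t * (t / wF t) ≤ qF u * (t / wF t) :=
          mul_le_mul_of_nonneg_right hqt (div_nonneg ht0.le hwt.le)
        have heq : qF t * (t / wF t) = aF t := by
          unfold qF
          field_simp [hwt.ne', ht0.ne']
        linarith [hmul, heq.le, heq.ge]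
    have h := mono (⟨le_refl _, huv⟩ : u ∈ Icc u v)
      (⟨huv, le_refl _⟩ : v ∈ Icc u v) huv
    simp only at h
    nlinarith [h]
  -- combine
  have t1 : (gF v - gF u) * gF u ≤ qF u * (fF v - fF u) * gF u :=
    mul_le_mul_of_nonneg_right ib hGu
  have t2 : qF u * fF u * (gF v - gF u) ≤ gF u * (gF v - gF u) :=
    mul_le_mul_of_nonneg_right ia (by linarith)
  nlinarith [t1, t2, hq]

end AlphaAux

/-- `α(ξ) = φ(ξ)/ξ` is monotone increasing on `(0, ln 2]` (Lemma 4 of the paper). -/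
theorem alpha_monotone : MonotoneOn alphaF (Set.Ioc 0 (Real.log 2)) := by
  classical
  have hln2 : (0:ℝ) < Real.log 2 := Real.log_pos one_lt_two
  have hmono : StrictMonoOn binEnt (Set.Icc 0 (1 / 2)) := by
    apply strictMonoOn_of_deriv_pos (convex_Icc 0 (1 / 2))
      AlphaAux.binEnt_cont.continuousOn
    intro s hs
    rw [interior_Icc] at hs
    rw [(AlphaAux.hbinEnt hs.1 (by linarith [hs.2])).deriv]
    have : s < 1 - s := by linarith [hs.2]
    have := Real.log_lt_log hs.1 this
    linarith
  have hsurj : Set.Icc 0 (Real.log 2) ⊆ binEnt '' Set.Icc 0 (1 / 2) := by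
    have h := intermediate_value_Icc (by norm_num : (0:ℝ) ≤ 1 / 2)
      AlphaAux.binEnt_cont.continuousOn
    rwa [AlphaAux.binEnt_zero, AlphaAux.binEnt_half] at h
  intro x hx y hy hxy
  obtain ⟨hx0, hx1⟩ := hx
  obtain ⟨hy0, hy1⟩ := hy
  -- inverse facts
  have hexx : ∃ a ∈ Set.Icc (0:ℝ) (1 / 2), binEnt a = Real.log 2 - x := by
    obtain ⟨a, ha, hav⟩ := hsurj (⟨by linarith, by linarith⟩ :
      Real.log 2 - x ∈ Set.Icc 0 (Real.log 2))
    exact ⟨a, ha, hav⟩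
  have hexy : ∃ a ∈ Set.Icc (0:ℝ) (1 / 2), binEnt a = Real.log 2 - y := by
    obtain ⟨a, ha, hav⟩ := hsurj (⟨by linarith, by linarith⟩ :
      Real.log 2 - y ∈ Set.Icc 0 (Real.log 2))
    exact ⟨a, ha, hav⟩
  set s₁ := binEntInv (Real.log 2 - x) with hs₁def
  set s₂ := binEntInv (Real.log 2 - y) with hs₂def
  have hmem₁ : s₁ ∈ Set.Icc (0:ℝ) (1 / 2) := Function.invFunOn_mem hexx
  have hmem₂ : s₂ ∈ Set.Icc (0:ℝ) (1 / 2) := Function.invFunOn_mem hexy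
  have heq₁ : binEnt s₁ = Real.log 2 - x := Function.invFunOn_eq hexx
  have heq₂ : binEnt s₂ = Real.log 2 - y := Function.invFunOn_eq hexy
  have hs₁lt : s₁ < 1 / 2 := by
    rcases lt_or_eq_of_le hmem₁.2 with h | h
    · exact h
    · rw [h, AlphaAux.binEnt_half] at heq₁; linarith
  have hs₂lt : s₂ < 1 / 2 := by
    rcases lt_or_eq_of_le hmem₂.2 with h | h
    · exact h
    · rw [h, AlphaAux.binEnt_half] at heq₂; linarith
  have hs₂₁ : s₂ ≤ s₁ := by
    have : binEnt s₂ ≤ binEnt s₁ := by rw [heq₁, heq₂]; linarith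
    exact (hmono.le_iff_le hmem₂ hmem₁).mp this
  set u₁ := 1 - 2 * s₁ with hu₁def
  set u₂ := 1 - 2 * s₂ with hu₂def
  have hu₁0 : 0 < u₁ := by simp only [hu₁def]; linarith
  have hu₂0 : 0 < u₂ := by simp only [hu₂def]; linarith
  have hu₁1 : u₁ ≤ 1 := by simp only [hu₁def]; linarith [hmem₁.1]
  have hu₂1 : u₂ ≤ 1 := by simp only [hu₂def]; linarith [hmem₂.1]
  have hu₁₂ : u₁ ≤ u₂ := by simp only [hu₁def, hu₂def]; linarith
  have hg₁ : AlphaAux.gF u₁ = x := by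
    unfold AlphaAux.gF
    rw [show (1 - u₁) / 2 = s₁ by rw [hu₁def]; ring, heq₁]; ring
  have hg₂ : AlphaAux.gF u₂ = y := by
    unfold AlphaAux.gF
    rw [show (1 - u₂) / 2 = s₂ by rw [hu₂def]; ring, heq₂]; ring
  have hsqrt4 : Real.sqrt 4 = 2 := by
    rw [show (4:ℝ) = 2 ^ 2 by norm_num, Real.sqrt_sq (by norm_num : (0:ℝ) ≤ 2)]
  have hphi₁ : phiF x = AlphaAux.fF u₁ / 2 := by
    unfold phiF AlphaAux.fF
    rw [← hs₁def, show s₁ * (1 - s₁) = (1 - u₁ ^ 2) / 4 by rw [hu₁def]; ring,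
      Real.sqrt_div' _ (by norm_num : (0:ℝ) ≤ 4), hsqrt4]
    ring
  have hphi₂ : phiF y = AlphaAux.fF u₂ / 2 := by
    unfold phiF AlphaAux.fF
    rw [← hs₂def, show s₂ * (1 - s₂) = (1 - u₂ ^ 2) / 4 by rw [hu₂def]; ring,
      Real.sqrt_div' _ (by norm_num : (0:ℝ) ≤ 4), hsqrt4]
    ring
  have hkey : AlphaAux.fF u₁ * AlphaAux.gF u₂ ≤ AlphaAux.fF u₂ * AlphaAux.gF u₁ :=
    AlphaAux.key_ineq hu₁0 hu₁₂ hu₂1 (by rw [hg₁]; linarith) (by rw [hg₁, hg₂]; linarith)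
  rw [hg₁, hg₂] at hkey
  unfold alphaF
  rw [if_neg hx0.ne', if_neg (lt_of_lt_of_le hx0 hxy).ne', hphi₁, hphi₂,
    inv_mul_eq_div, inv_mul_eq_div, div_le_div_iff₀ hx0 (lt_of_lt_of_le hx0 hxy)]
  linarith


end
end
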